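/- arXiv:0710.2898 — 6 statements merged into one kernel-verified Lean document; each statement's English description precedes it below -/
import Mathlib

section
/- Let ℋ be a complex Hilbert space, let 1 ≤ r < k < ∞ with k ≤ dim ℋ, let A ∈ B(ℋ), and let F ∈ B(ℋ) be an operator of rank at most r. Then Λ_k(A) ⊆ Λ_{k−r}(A + F). Consequently, Λ_k(A) ⊆ ⋂{Λ_{k−r}(A + F) : F ∈ B(ℋ), rank(F) ≤ r}. -/
noncomputable section

open scoped InnerProductSpace
open Complex

variable {H : Type*} [NormedAddCommGroup H] [InnerProductSpace ℂ H] [CompleteSpace H]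

/-- `P` is an orthogonal projection: self-adjoint and idempotent. -/
def IsOrthProj (P : H →L[ℂ] H) : Prop :=
  IsSelfAdjoint P ∧ P ∘L P = P

/-- The rank of a bounded operator, as a cardinal. -/
def opRank (F : H →L[ℂ] H) : Cardinal :=
  Module.rank ℂ (LinearMap.range (F : H →ₗ[ℂ] H))

/-- The rank-`k` numerical range `Λ_k(A)`. -/
def rankKRange (k : ℕ) (A : H →L[ℂ] H) : Set ℂ :=
  { lam | ∃ P : H →L[ℂ] H, IsOrthProj P ∧ opRank P = k ∧ P ∘L A ∘L P = lam • P }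

/-- The classical numerical range `W(A)`. -/
def numRange (A : H →L[ℂ] H) : Set ℂ :=
  { z | ∃ x : H, ‖x‖ = 1 ∧ ⟪x, A x⟫_ℂ = z }

/-- `λ_k(T)`: the supremum over `k`-dimensional compressions of the `k`-th largest
eigenvalue of the compression (Courant–Fischer form: sup over `k`-dimensional
subspaces of the infimum of the Rayleigh quotient). -/
def lambdaSA (k : ℕ) (T : H →L[ℂ] H) : ℝ :=
  sSup { t : ℝ | ∃ V : Submodule ℂ H, Module.finrank ℂ V = k ∧
    ∀ x ∈ V, ‖x‖ = 1 → t ≤ (⟪x, T x⟫_ℂ).re }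

/-- The real part `(T + T*)/2` of an operator. -/
def reOp (T : H →L[ℂ] H) : H →L[ℂ] H :=
  (2 : ℂ)⁻¹ • (T + ContinuousLinearMap.adjoint T)

/-- The set `Ω_k(A)`. -/
def omegaK (k : ℕ) (A : H →L[ℂ] H) : Set ℂ :=
  { μ | ∀ ξ ∈ Set.Ico (0 : ℝ) (2 * Real.pi),
      (Complex.exp (ξ * Complex.I) * μ).re ≤ lambdaSA k (reOp (Complex.exp (ξ * Complex.I) • A)) }


lemma aux_exists_submodule {M : Type*} [AddCommGroup M] [Module ℂ M]
    [FiniteDimensional ℂ M] {n : ℕ} (h : n ≤ Module.finrank ℂ M) :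
    ∃ W : Submodule ℂ M, Module.finrank ℂ W = n := by
  classical
  let b := Module.finBasis ℂ M
  have hli : LinearIndependent ℂ (b ∘ Fin.castLE h) :=
    b.linearIndependent.comp _ (Fin.castLE_injective h)
  refine ⟨Submodule.span ℂ (Set.range (b ∘ Fin.castLE h)), ?_⟩
  rw [finrank_span_eq_card hli]
  simp

lemma key_step (r k : ℕ) (hrk : r < k)
    (A F : H →L[ℂ] H) (hF : opRank F ≤ r) :
    rankKRange k A ⊆ rankKRange (k - r) (A + F) := by
  rintro lam ⟨P, ⟨hPsa, hPidem⟩, hPrank, hPAP⟩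
  set K : Submodule ℂ H := LinearMap.range (P : H →ₗ[ℂ] H) with hK
  have hKrank : Module.rank ℂ K = k := hPrank
  haveI : FiniteDimensional ℂ K := Module.finite_of_rank_eq_nat hKrank
  have hKfin : Module.finrank ℂ K = k := Module.finrank_eq_of_rank_eq hKrank
  -- restriction of F to K
  set f : K →ₗ[ℂ] H := (F : H →ₗ[ℂ] H).comp K.subtype with hf
  have hrangef : LinearMap.range f ≤ LinearMap.range (F : H →ₗ[ℂ] H) :=
    LinearMap.range_comp_le_range _ _
  have hrankf : Module.finrank ℂ (LinearMap.range f) ≤ r := by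
    have h1 : Module.rank ℂ (LinearMap.range f) ≤ (r : Cardinal) :=
      le_trans (Submodule.rank_mono hrangef) hF
    haveI : FiniteDimensional ℂ (LinearMap.range f) := Module.Finite.range f
    rwa [← Module.finrank_eq_rank, Nat.cast_le] at h1
  have hker : k - r ≤ Module.finrank ℂ (LinearMap.ker f) := by
    have := LinearMap.finrank_range_add_finrank_ker f
    omega
  obtain ⟨g, hg⟩ := aux_exists_submodule (M := LinearMap.ker f) hker
  -- W as a submodule of H
  set W : Submodule ℂ H := (g.map (LinearMap.ker f).subtype).map K.subtype with hW
  haveI : FiniteDimensional ℂ W := by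
    haveI : FiniteDimensional ℂ (g.map (LinearMap.ker f).subtype) :=
      Module.Finite.map _ _
    exact Module.Finite.map _ _
  have hWfin : Module.finrank ℂ W = k - r := by
    rw [hW, Submodule.finrank_map_subtype_eq, Submodule.finrank_map_subtype_eq, hg]
  have hWK : W ≤ K := by
    rw [hW]
    exact (Submodule.map_subtype_le _ _)
  have hWF : ∀ x ∈ W, F x = 0 := by
    rintro x hx
    rw [hW] at hx
    obtain ⟨y, hy, rfl⟩ := hx
    obtain ⟨z, hz, rfl⟩ := hy
    exact z.2
  -- P fixes K
  have hPfix : ∀ x ∈ K, P x = x := by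
    rintro x ⟨y, rfl⟩
    have := congrFun (congrArg (fun T : H →L[ℂ] H => (T : H → H)) hPidem) y
    simpa using this
  -- the projection Q
  set Q : H →L[ℂ] H := W.subtypeL ∘L W.orthogonalProjection with hQ
  have hQmem : ∀ x, Q x ∈ W := fun x => (W.orthogonalProjection x).2
  have hQfix : ∀ x ∈ W, Q x = x := by
    intro x hx
    exact Submodule.starProjection_eq_self_iff.mpr hx
  have hQsa : IsSelfAdjoint Q := isSelfAdjoint_starProjection W
  have hQidem : Q ∘L Q = Q := by
    ext x
    exact hQfix _ (hQmem x)
  have hPQ : P ∘L Q = Q := by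
    ext x
    exact hPfix _ (hWK (hQmem x))
  have hQP : Q ∘L P = Q := by
    have := congrArg ContinuousLinearMap.adjoint hPQ
    rwa [ContinuousLinearMap.adjoint_comp, hQsa.adjoint_eq, hPsa.adjoint_eq] at this
  have hFQ : F ∘L Q = 0 := by
    ext x
    exact hWF _ (hQmem x)
  have hQrange : LinearMap.range (Q : H →ₗ[ℂ] H) = W := by
    apply le_antisymm
    · rintro x ⟨y, rfl⟩
      exact hQmem y
    · intro x hx
      exact ⟨x, hQfix x hx⟩
  refine ⟨Q, ⟨hQsa, hQidem⟩, ?_, ?_⟩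
  · rw [opRank, hQrange, ← Module.finrank_eq_rank, hWfin]
  · have : Q ∘L (A + F) ∘L Q = Q ∘L A ∘L Q + Q ∘L (F ∘L Q) := by
      rw [ContinuousLinearMap.add_comp, ContinuousLinearMap.comp_add]
    rw [this, hFQ, ContinuousLinearMap.comp_zero, add_zero]
    calc Q ∘L A ∘L Q = (Q ∘L P) ∘L A ∘L (P ∘L Q) := by rw [hPQ, hQP]
      _ = Q ∘L (P ∘L A ∘L P) ∘L Q := by
          simp only [ContinuousLinearMap.comp_assoc]
      _ = Q ∘L (lam • P) ∘L Q := by rw [hPAP]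
      _ = lam • (Q ∘L P ∘L Q) := by
          simp [ContinuousLinearMap.comp_smul, ContinuousLinearMap.smul_comp]
      _ = lam • Q := by rw [← ContinuousLinearMap.comp_assoc, hQP, hQidem]

/-- Low rank perturbation: if `1 ≤ r < k ≤ dim ℋ` and `rank F ≤ r`, then
`Λ_k(A) ⊆ Λ_{k-r}(A+F)`; consequently `Λ_k(A)` is contained in the intersection of
`Λ_{k-r}(A+F)` over all operators `F` of rank at most `r`. -/
theorem rankKRange_subset_perturbed
    (r k : ℕ) (hr : 1 ≤ r) (hrk : r < k) (hk : (k : Cardinal) ≤ Module.rank ℂ H)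
    (A : H →L[ℂ] H) :
    (∀ F : H →L[ℂ] H, opRank F ≤ r →
      rankKRange k A ⊆ rankKRange (k - r) (A + F)) ∧
    rankKRange k A ⊆
      ⋂ F ∈ {F : H →L[ℂ] H | opRank F ≤ r}, rankKRange (k - r) (A + F) := by
  refine ⟨fun F hF => key_step r k hrk A F hF, ?_⟩
  intro lam hlam
  refine Set.mem_iInter₂.mpr fun F hF => key_step r k hrk A F hF hlam
end
end

section
/- Let ℋ be a complex Hilbert space, A ∈ B(ℋ), and 1 ≤ r < k < ∞ with k ≤ dim ℋ. Let 𝒮 be any subset of F_r containing the set 𝒮₀ = {2e^{iξ}‖A‖P : P ∈ P_r, ξ ∈ [0,2π)}. Then Ω_k(A) = ⋂{Ω_{k−r}(A + F) : F ∈ 𝒮}. -/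
noncomputable section

open scoped InnerProductSpace
open Complex

variable {H : Type*} [NormedAddCommGroup H] [InnerProductSpace ℂ H] [CompleteSpace H]

set_option linter.unusedSectionVars false
set_option linter.unusedVariables false

/-- the set whose sup is lambdaSA -/
def Sset (k : ℕ) (T : H →L[ℂ] H) : Set ℝ :=
  { t : ℝ | ∃ V : Submodule ℂ H, Module.finrank ℂ V = k ∧
    ∀ x ∈ V, ‖x‖ = 1 → t ≤ (⟪x, T x⟫_ℂ).re }

-- unit vector in a submodule of positive finrank
lemma exists_unit (V : Submodule ℂ H) (h : 0 < Module.finrank ℂ V) :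
    ∃ x ∈ V, ‖x‖ = 1 := by
  have hbot : V ≠ ⊥ := by intro hb; rw [hb] at h; simp at h
  obtain ⟨v, hvV, hv0⟩ := Submodule.exists_mem_ne_zero_of_ne_bot hbot
  refine ⟨(‖v‖:ℂ)⁻¹ • v, V.smul_mem _ hvV, ?_⟩
  simp [norm_smul, norm_inv, inv_mul_cancel₀ (norm_ne_zero_iff.mpr hv0)]

lemma ray_le (T : H →L[ℂ] H) (x : H) (hx : ‖x‖ = 1) : (⟪x, T x⟫_ℂ).re ≤ ‖T‖ := by
  calc (⟪x, T x⟫_ℂ).re ≤ ‖⟪x, T x⟫_ℂ‖ := Complex.re_le_norm _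
    _ ≤ ‖x‖ * ‖T x‖ := norm_inner_le_norm _ _
    _ ≤ ‖x‖ * (‖T‖ * ‖x‖) := by gcongr; exact T.le_opNorm x
    _ = ‖T‖ := by rw [hx]; ring

lemma ray_ge (T : H →L[ℂ] H) (x : H) (hx : ‖x‖ = 1) : -‖T‖ ≤ (⟪x, T x⟫_ℂ).re := by
  have h1 : ‖⟪x, T x⟫_ℂ‖ ≤ ‖T‖ := by
    calc ‖⟪x, T x⟫_ℂ‖ ≤ ‖x‖ * ‖T x‖ := norm_inner_le_norm _ _
      _ ≤ ‖x‖ * (‖T‖ * ‖x‖) := by gcongr; exact T.le_opNorm x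
      _ = ‖T‖ := by rw [hx]; ring
  have h2 := Complex.abs_re_le_norm (⟪x, T x⟫_ℂ)
  have h3 := neg_abs_le (⟪x, T x⟫_ℂ).re
  have : |(⟪x, T x⟫_ℂ).re| ≤ ‖T‖ := le_trans h2 h1
  linarith [abs_le.mp this]

lemma Sset_bddAbove (k : ℕ) (hk : 0 < k) (T : H →L[ℂ] H) : BddAbove (Sset k T) := by
  refine ⟨‖T‖, fun t ht => ?_⟩
  obtain ⟨V, hV, hray⟩ := ht
  obtain ⟨x, hxV, hx⟩ := exists_unit V (hV ▸ hk)
  exact (hray x hxV hx).trans (ray_le T x hx)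

-- existence of a submodule of any finrank ≤ rank
lemma exists_submodule_finrank (n : ℕ) (hn : (n : Cardinal) ≤ Module.rank ℂ H) :
    ∃ V : Submodule ℂ H, Module.finrank ℂ V = n := by
  obtain ⟨f, hf⟩ := exists_linearIndependent_of_le_rank hn
  exact ⟨Submodule.span ℂ (Set.range f), by
    rw [finrank_span_eq_card hf, Fintype.card_fin]⟩

lemma neg_norm_mem_Sset (k : ℕ) (hk : (k : Cardinal) ≤ Module.rank ℂ H) (T : H →L[ℂ] H) :
    -‖T‖ ∈ Sset k T := by
  obtain ⟨V, hV⟩ := exists_submodule_finrank k hk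
  exact ⟨V, hV, fun x _ hx => ray_ge T x hx⟩
-- submodule of prescribed finrank inside a module with rank ≥ n (works for  subspaces via map)
lemma exists_le_finrank (W : Submodule ℂ H) (n : ℕ) (hn : (n : Cardinal) ≤ Module.rank ℂ W) :
    ∃ V : Submodule ℂ H, V ≤ W ∧ FiniteDimensional ℂ V ∧ Module.finrank ℂ V = n := by
  obtain ⟨f, hf⟩ := exists_linearIndependent_of_le_rank hn
  have hf' : LinearIndependent ℂ (fun i => ((f i : W) : H)) := hf.map' W.subtype W.ker_subtype
  refine ⟨Submodule.span ℂ (Set.range fun i => ((f i : W) : H)), ?_,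
    FiniteDimensional.span_of_finite ℂ (Set.finite_range _), ?_⟩
  · rw [Submodule.span_le]; rintro - ⟨i, rfl⟩; exact (f i).2
  · rw [finrank_span_eq_card hf', Fintype.card_fin]

lemma exists_le_finrank' (W : Submodule ℂ H) [FiniteDimensional ℂ W] (n : ℕ)
    (hn : n ≤ Module.finrank ℂ W) :
    ∃ V : Submodule ℂ H, V ≤ W ∧ FiniteDimensional ℂ V ∧ Module.finrank ℂ V = n := by
  apply exists_le_finrank
  rw [← Module.finrank_eq_rank]; exact_mod_cast hn

lemma reOp_add (T S : H →L[ℂ] H) :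
    (2 : ℂ)⁻¹ • ((T + S) + ContinuousLinearMap.adjoint (T + S))
      = ((2 : ℂ)⁻¹ • (T + ContinuousLinearMap.adjoint T))
        + ((2 : ℂ)⁻¹ • (S + ContinuousLinearMap.adjoint S)) := by
  rw [map_add]; module
lemma inner_reOp_eq_zero_right (c : ℂ) (F : H →L[ℂ] H) (x : H) (hFx : F x = 0) :
    ⟪x, reOp (c • F) x⟫_ℂ = 0 := by
  simp only [reOp, ContinuousLinearMap.smul_apply, ContinuousLinearMap.add_apply]
  rw [inner_smul_right, inner_add_right, ContinuousLinearMap.adjoint_inner_right]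
  simp [ContinuousLinearMap.smul_apply, hFx, inner_smul_right, inner_smul_left]

lemma Sset_subset_perturb (k r : ℕ) (hrk : r < k) (c : ℂ) (A F : H →L[ℂ] H)
    (hF : opRank F ≤ r) :
    Sset k (reOp (c • A)) ⊆ Sset (k - r) (reOp (c • (A + F))) := by
  rintro t ⟨V, hV, hray⟩
  have hVfd : FiniteDimensional ℂ V := FiniteDimensional.of_finrank_pos (by omega)
  let φ : V →ₗ[ℂ] H := (F : H →ₗ[ℂ] H).domRestrict V
  have hrange : LinearMap.range φ ≤ LinearMap.range (F : H →ₗ[ℂ] H) := by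
    rintro - ⟨v, rfl⟩; exact ⟨v, rfl⟩
  have hfr : Module.finrank ℂ (LinearMap.range φ) ≤ r := by
    have h1 : Module.rank ℂ (LinearMap.range φ) ≤ r :=
      (Submodule.rank_mono hrange).trans hF
    have := Module.finrank_eq_rank ℂ (LinearMap.range φ)
    rw [← this] at h1
    exact_mod_cast h1
  have hker : k - r ≤ Module.finrank ℂ (LinearMap.ker φ) := by
    have := LinearMap.finrank_range_add_finrank_ker φ
    omega
  have hker' : k - r ≤ Module.finrank ℂ ((LinearMap.ker φ).map V.subtype) := by
    rwa [Submodule.finrank_map_subtype_eq]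
  obtain ⟨W, hWle, hWfd, hWrank⟩ := exists_le_finrank' ((LinearMap.ker φ).map V.subtype) _ hker'
  refine ⟨W, hWrank, fun x hxW hx => ?_⟩
  obtain ⟨⟨v, hvV⟩, hvker, hvx⟩ := hWle hxW
  have hxV : x ∈ V := by rw [← hvx]; exact hvV
  have hFx : F x = 0 := by
    have : φ ⟨v, hvV⟩ = 0 := hvker
    rw [← hvx]
    simpa [φ, LinearMap.domRestrict_apply] using this
  have : reOp (c • (A + F)) = reOp (c • A) + reOp (c • F) := by
    rw [smul_add]; unfold reOp; rw [map_add]; module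
  rw [this]
  simp only [ContinuousLinearMap.add_apply, inner_add_right]
  rw [inner_reOp_eq_zero_right c F x hFx, add_zero]
  exact hray x hxV hx
lemma symmInner (Q : H →L[ℂ] H) (hQ : IsSelfAdjoint Q) (x z : H) :
    ⟪Q x, z⟫_ℂ = ⟪x, Q z⟫_ℂ := by simpa using hQ.isSymmetric x z

lemma inner_real_smul_right' (x y : H) (r : ℝ) : ⟪x, r • y⟫_ℂ = (r : ℂ) * ⟪x, y⟫_ℂ := by
  rw [← algebraMap_smul ℂ r y, inner_smul_right, Complex.coe_algebraMap]

lemma lambdaSA_eq_sSup (k : ℕ) (T : H →L[ℂ] H) : lambdaSA k T = sSup (Sset k T) := rfl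

lemma lambdaSA_le_norm (k : ℕ) (hk0 : 0 < k) (hk : (k : Cardinal) ≤ Module.rank ℂ H)
    (T : H →L[ℂ] H) : lambdaSA k T ≤ ‖T‖ := by
  rw [lambdaSA_eq_sSup]
  exact csSup_le ⟨_, neg_norm_mem_Sset k hk T⟩ (fun t ht => by
    obtain ⟨V, hV, hray⟩ := ht
    obtain ⟨x, hxV, hx⟩ := exists_unit V (hV ▸ hk0)
    exact (hray x hxV hx).trans (ray_le T x hx))

lemma neg_norm_le_lambdaSA (k : ℕ) (hk0 : 0 < k) (hk : (k : Cardinal) ≤ Module.rank ℂ H)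
    (T : H →L[ℂ] H) : -‖T‖ ≤ lambdaSA k T :=
  le_csSup (Sset_bddAbove k hk0 T) (neg_norm_mem_Sset k hk T)

lemma exists_top_subspace (T : H →L[ℂ] H) (hT : IsSelfAdjoint T) (k : ℕ) (hk0 : 0 < k)
    (hkrank : (k : Cardinal) ≤ Module.rank ℂ H) (t' : ℝ) (ht' : lambdaSA k T < t') :
    ∃ G : Submodule ℂ H, FiniteDimensional ℂ G ∧ Module.finrank ℂ G < k ∧
      (∀ x ∈ G, T x ∈ G) ∧
      (∀ w : H, w ∈ Gᗮ → (⟪w, T w⟫_ℂ).re ≤ t' * ‖w‖ ^ 2) := by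
  have : (0 : Cardinal) < Module.rank ℂ H := lt_of_lt_of_le (by exact_mod_cast hk0) hkrank
  haveI : Nontrivial H := rank_pos_iff_nontrivial.mp this
  set g : ℝ → ℝ := fun s => max (s - t') 0 with hgdef
  have hgc : Continuous g := by fun_prop
  set Q : H →L[ℂ] H := cfc g T with hQdef
  have hQsa : IsSelfAdjoint Q := cfc_predicate g T
  have hQsym : (Q : H →ₗ[ℂ] H).IsSymmetric := hQsa.isSymmetric
  set G : Submodule ℂ H := LinearMap.range (Q : H →ₗ[ℂ] H) with hGdef
  have hmemG : ∀ y : H, Q y ∈ G := fun y => ⟨y, rfl⟩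
  -- commutation
  have hcomm : Q * T = T * Q := by
    have h1 := (cfc_commute_cfc (id : ℝ → ℝ) g T).symm
    rwa [cfc_id ℝ T hT] at h1
  have happly : ∀ y : H, Q (T y) = T (Q y) := by
    intro y
    have := congrArg (fun B : H →L[ℂ] H => B y) hcomm
    simpa [ContinuousLinearMap.mul_apply] using this
  -- invariance
  have hinv : ∀ x ∈ G, T x ∈ G := by
    rintro - ⟨y, rfl⟩
    exact ⟨T y, by simpa using happly y⟩
  -- every unit vector in G has Rayleigh quotient ≥ t'
  have hrayG : ∀ x ∈ G, ‖x‖ = 1 → t' ≤ (⟪x, T x⟫_ℂ).re := by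
    rintro - ⟨y, rfl⟩ hy
    simp only [ContinuousLinearMap.coe_coe] at hy ⊢
    set q3 : ℝ → ℝ := fun s => Real.sqrt (g s * s * g s - t' * (g s * g s)) with hq3def
    have hq3c : Continuous q3 := by fun_prop
    have hq3sq : ∀ s : ℝ, q3 s * q3 s = g s * s * g s - t' * (g s * g s) := by
      intro s
      apply Real.mul_self_sqrt
      rcases le_or_gt s t' with h | h
      · have hg0 : g s = 0 := by simp [hgdef, sub_nonpos.mpr h]
        simp [hg0]
      · have hg0 : g s = s - t' := by simp [hgdef, le_of_lt (sub_pos.mpr h)]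
        nlinarith [sq_nonneg (s - t')]
    set R3 : H →L[ℂ] H := cfc q3 T with hR3def
    have hR3sym : (R3 : H →ₗ[ℂ] H).IsSymmetric := (cfc_predicate q3 T).isSymmetric
    have e1 : cfc (fun s => g s * s) T = Q * T := by
      rw [cfc_mul g (fun s => s) T (by fun_prop) (by fun_prop), cfc_id' ℝ T hT]
    have e2 : cfc (fun s => g s * s * g s) T = Q * T * Q := by
      rw [cfc_mul (fun s => g s * s) g T (by fun_prop) (by fun_prop), e1]
    have e3 : cfc (fun s => g s * g s) T = Q * Q :=
      cfc_mul g g T (by fun_prop) (by fun_prop)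
    have e4 : cfc (fun s => t' * (g s * g s)) T = t' • (Q * Q) := by
      rw [cfc_const_mul t' (fun s => g s * g s) T (by fun_prop), e3]
    have hop : Q * T * Q = t' • (Q * Q) + R3 * R3 := by
      have h5 : R3 * R3 = cfc (fun s => g s * s * g s - t' * (g s * g s)) T := by
        rw [← cfc_mul q3 q3 T (by fun_prop) (by fun_prop)]
        exact cfc_congr (fun s _ => hq3sq s)
      rw [h5, cfc_sub (a := T) (f := fun s => g s * s * g s)
        (g := fun s => t' * (g s * g s)) (by fun_prop) (by fun_prop), e2, e4]
      abel
    have happ : Q (T (Q y)) = t' • (Q (Q y)) + R3 (R3 y) := by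
      have := congrArg (fun B : H →L[ℂ] H => B y) hop
      simpa [ContinuousLinearMap.mul_apply, ContinuousLinearMap.add_apply] using this
    have hcalc : (⟪Q y, T (Q y)⟫_ℂ).re = t' * ‖Q y‖ ^ 2 + ‖R3 y‖ ^ 2 := by
      rw [symmInner Q hQsa y (T (Q y)), happ, inner_add_right, inner_real_smul_right',
        ← symmInner Q hQsa y (Q y), ← symmInner R3 (cfc_predicate q3 T) y (R3 y),
        inner_self_eq_norm_sq_to_K, inner_self_eq_norm_sq_to_K]
      simp [← Complex.ofReal_pow, ← Complex.ofReal_mul, ← Complex.ofReal_add]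
    rw [hcalc, hy]
    nlinarith [sq_nonneg ‖R3 y‖]
  -- rank of G is < k
  have hrankG : Module.rank ℂ G < k := by
    by_contra hge
    push_neg at hge
    obtain ⟨f, hf⟩ := exists_linearIndependent_of_le_rank (R := ℂ) (M := G) hge
    have hf' : LinearIndependent ℂ (fun i => ((f i : G) : H)) := hf.map' G.subtype G.ker_subtype
    set V : Submodule ℂ H := Submodule.span ℂ (Set.range fun i => ((f i : G) : H)) with hVdef
    have hVle : V ≤ G := by
      rw [Submodule.span_le]; rintro - ⟨i, rfl⟩; exact (f i).2
    have hVrank : Module.finrank ℂ V = k := by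
      rw [hVdef, finrank_span_eq_card hf', Fintype.card_fin]
    have ht'mem : t' ∈ Sset k T := ⟨V, hVrank, fun x hx hx1 => hrayG x (hVle hx) hx1⟩
    have : t' ≤ lambdaSA k T := le_csSup (Sset_bddAbove k hk0 T) ht'mem
    linarith
  have hfdG : FiniteDimensional ℂ G := by
    exact Module.rank_lt_aleph0_iff.mp (hrankG.trans (Cardinal.nat_lt_aleph0 k))
  have hfrG : Module.finrank ℂ G < k := by
    have := Module.finrank_eq_rank ℂ G
    have h2 : (Module.finrank ℂ G : Cardinal) < (k : Cardinal) := this ▸ hrankG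
    exact_mod_cast h2
  -- Q vanishes on Gᗮ
  have hkerQ : ∀ w ∈ Gᗮ, Q w = 0 := by
    intro w hw
    have h0 : ⟪Q (Q w), w⟫_ℂ = 0 := by
      rw [Submodule.mem_orthogonal] at hw
      exact hw (Q (Q w)) (hmemG (Q w))
    have h1 : ⟪Q w, Q w⟫_ℂ = 0 := by
      rw [← symmInner Q hQsa (Q w) w]; exact h0
    rwa [inner_self_eq_zero] at h1
  -- Rayleigh bound on Gᗮ
  have hrayGperp : ∀ w : H, w ∈ Gᗮ → (⟪w, T w⟫_ℂ).re ≤ t' * ‖w‖ ^ 2 := by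
    intro w hw
    set q2 : ℝ → ℝ := fun s => Real.sqrt (t' - s + g s) with hq2def
    have hq2c : Continuous q2 := by fun_prop
    have hq2sq : ∀ s : ℝ, q2 s * q2 s = t' - s + g s := by
      intro s
      apply Real.mul_self_sqrt
      rcases le_or_gt s t' with h | h
      · have hg0 : g s = 0 := by simp [hgdef, sub_nonpos.mpr h]
        simp [hg0]; linarith
      · have hg0 : g s = s - t' := by simp [hgdef, le_of_lt (sub_pos.mpr h)]
        simp [hg0]
    set R2 : H →L[ℂ] H := cfc q2 T with hR2def
    have hR2sym : (R2 : H →ₗ[ℂ] H).IsSymmetric := (cfc_predicate q2 T).isSymmetric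
    have hop2 : T = t' • (1 : H →L[ℂ] H) + Q - R2 * R2 := by
      have h5 : R2 * R2 = cfc (fun s => t' - s + g s) T := by
        rw [← cfc_mul q2 q2 T (by fun_prop) (by fun_prop)]
        exact cfc_congr (fun s _ => hq2sq s)
      have h6 : cfc (fun s => t' - s + g s) T
          = t' • (1 : H →L[ℂ] H) - T + Q := by
        rw [cfc_add (a := T) (fun s => t' - s) g (by fun_prop) (by fun_prop),
          cfc_sub (a := T) (f := fun _ => t') (g := fun s => s) (by fun_prop) (by fun_prop),
          cfc_id' ℝ T hT, cfc_const t' T hT]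
        simp [Algebra.algebraMap_eq_smul_one, hQdef]
      rw [h5, h6]
      abel
    have happ2 : T w = t' • w - R2 (R2 w) := by
      conv_lhs => rw [hop2]
      simp [ContinuousLinearMap.sub_apply, ContinuousLinearMap.add_apply,
        ContinuousLinearMap.mul_apply, hkerQ w hw]
    rw [happ2, inner_sub_right, inner_real_smul_right',
      ← symmInner R2 (cfc_predicate q2 T) w (R2 w),
      inner_self_eq_norm_sq_to_K, inner_self_eq_norm_sq_to_K]
    simp [← Complex.ofReal_pow, ← Complex.ofReal_mul, ← Complex.ofReal_sub]
  exact ⟨G, hfdG, hfrG, hinv, hrayGperp⟩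

/-- orthogonal projection onto `U` as an operator `H →L[ℂ] H`. -/
def projCLM (U : Submodule ℂ H) [CompleteSpace U] : H →L[ℂ] H :=
  U.subtypeL ∘L Submodule.orthogonalProjectionOnto U

lemma projCLM_isOrthProj (U : Submodule ℂ H) [CompleteSpace U] : IsOrthProj (projCLM U) := by
  refine ⟨isSelfAdjoint_starProjection U, ?_⟩
  ext x
  simp [projCLM, Submodule.orthogonalProjectionOnto_mem_subspace_eq_self, Submodule.starProjection_eq_self_iff]

lemma projCLM_range (U : Submodule ℂ H) [CompleteSpace U] :
    LinearMap.range ((projCLM U : H →L[ℂ] H) : H →ₗ[ℂ] H) = U := by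
  apply le_antisymm
  · rintro - ⟨y, rfl⟩
    exact ((Submodule.orthogonalProjectionOnto U) y).2
  · intro u hu
    exact ⟨u, by simp [projCLM, Submodule.starProjection_eq_self_iff.mpr hu]⟩

lemma projCLM_opRank (U : Submodule ℂ H) [FiniteDimensional ℂ U] :
    opRank (projCLM U) = (Module.finrank ℂ U : Cardinal) := by
  rw [opRank, projCLM_range, ← Module.finrank_eq_rank]

lemma inner_projCLM_re (U : Submodule ℂ H) [CompleteSpace U] (x : H) :
    (⟪x, projCLM U x⟫_ℂ).re = ‖(Submodule.orthogonalProjectionOnto U x : H)‖ ^ 2 := by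
  have h1 : ⟪x - (Submodule.orthogonalProjectionOnto U x : H), (Submodule.orthogonalProjectionOnto U x : H)⟫_ℂ = 0 :=
    Submodule.starProjection_inner_eq_zero x _ (Submodule.orthogonalProjectionOnto U x).2
  have h2 : ⟪x, (Submodule.orthogonalProjectionOnto U x : H)⟫_ℂ
      = ⟪(Submodule.orthogonalProjectionOnto U x : H), (Submodule.orthogonalProjectionOnto U x : H)⟫_ℂ := by
    have := inner_sub_left (𝕜 := ℂ) x ((Submodule.orthogonalProjectionOnto U x : H)) ((Submodule.orthogonalProjectionOnto U x : H))
    rw [h1] at this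
    linear_combination -this
  have : (⟪x, projCLM U x⟫_ℂ) = ⟪x, (Submodule.orthogonalProjectionOnto U x : H)⟫_ℂ := rfl
  rw [this, h2, inner_self_eq_norm_sq_to_K]
  simp [← Complex.ofReal_pow]

lemma ray_le_gen (T : H →L[ℂ] H) (x : H) : (⟪x, T x⟫_ℂ).re ≤ ‖T‖ * ‖x‖ ^ 2 := by
  calc (⟪x, T x⟫_ℂ).re ≤ ‖⟪x, T x⟫_ℂ‖ := Complex.re_le_norm _
    _ ≤ ‖x‖ * ‖T x‖ := norm_inner_le_norm _ _
    _ ≤ ‖x‖ * (‖T‖ * ‖x‖) := by gcongr; exact T.le_opNorm x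
    _ = ‖T‖ * ‖x‖ ^ 2 := by ring

set_option maxHeartbeats 1000000 in
/-- The main computation : rank-r projection compression bound. -/
lemma lambda_perturb_le (T T' : H →L[ℂ] H) (hT : IsSelfAdjoint T) (a t' : ℝ)
    (hTa : ‖T‖ ≤ a) (G U Z : Submodule ℂ H) [FiniteDimensional ℂ G] [FiniteDimensional ℂ U]
    [FiniteDimensional ℂ Z]
    (m : ℕ) (hm : 0 < m) (hmrank : (m : Cardinal) ≤ Module.rank ℂ H)
    (hZ : Module.finrank ℂ Z < m)
    (hinv : ∀ x ∈ G, T x ∈ G)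
    (hGperp : ∀ w ∈ Gᗮ, (⟪w, T w⟫_ℂ).re ≤ t' * ‖w‖ ^ 2)
    (hproj : ∀ x : H, x ∈ Zᗮ → ((Submodule.orthogonalProjectionOnto G x : H) ∈ U))
    (hT' : ∀ x : H, (⟪x, T' x⟫_ℂ).re
        = (⟪x, T x⟫_ℂ).re - 2 * a * (⟪x, projCLM U x⟫_ℂ).re) :
    lambdaSA m T' ≤ max t' (-a) := by
  have ha0 : 0 ≤ a := le_trans (norm_nonneg T) hTa
  rw [lambdaSA_eq_sSup]
  apply csSup_le ⟨_, neg_norm_mem_Sset m hmrank T'⟩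
  rintro b ⟨V, hV, hb⟩
  haveI : FiniteDimensional ℂ V := FiniteDimensional.of_finrank_pos (hV ▸ hm)
  -- find a unit vector in V ∩ Zᗮ
  set ψ : V →ₗ[ℂ] Z := ((Submodule.orthogonalProjectionOnto Z) : H →ₗ[ℂ] Z).domRestrict V with hψ
  have hrange : Module.finrank ℂ (LinearMap.range ψ) ≤ Module.finrank ℂ Z :=
    Submodule.finrank_le _
  have hkerpos : 0 < Module.finrank ℂ (LinearMap.ker ψ) := by
    have := LinearMap.finrank_range_add_finrank_ker ψ
    omega
  have : LinearMap.ker ψ ≠ ⊥ := by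
    intro hb'; rw [hb'] at hkerpos; simp at hkerpos
  obtain ⟨v, hvker, hv0⟩ := Submodule.exists_mem_ne_zero_of_ne_bot this
  have hvH0 : (v : H) ≠ 0 := fun h => hv0 (Subtype.ext h)
  set x : H := (‖(v : H)‖ : ℂ)⁻¹ • (v : H) with hx
  have hxV : x ∈ V := V.smul_mem _ v.2
  have hxn : ‖x‖ = 1 := by
    simp [hx, norm_smul, inv_mul_cancel₀ (norm_ne_zero_iff.mpr hvH0)]
  have hxZ : x ∈ Zᗮ := by
    have hpv : Submodule.orthogonalProjectionOnto Z (v : H) = 0 := hvker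
    have : Submodule.orthogonalProjectionOnto Z x = 0 := by
      rw [hx, map_smul, hpv, smul_zero]
    exact Submodule.orthogonalProjectionOnto_eq_zero_iff.mp this
  have hbx := hb x hxV hxn
  -- decompose x
  set u : H := (Submodule.orthogonalProjectionOnto G x : H) with hu
  set w : H := x - u with hw
  have hwG : w ∈ Gᗮ := Submodule.sub_starProjection_mem_orthogonal x
  have huG : u ∈ G := (Submodule.orthogonalProjectionOnto G x).2
  have huU : u ∈ U := hproj x hxZ
  have hxuw : x = u + w := by rw [hw]; abel
  have hinner_uw : ⟪u, w⟫_ℂ = 0 :=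
    (Submodule.mem_orthogonal _ _).mp hwG u huG
  -- Pythagoras
  have hpyth : ‖u‖ ^ 2 + ‖w‖ ^ 2 = 1 := by
    have := @norm_add_sq ℂ _ _ _ _ u w
    rw [hinner_uw] at this
    simp only [map_zero, mul_zero, add_zero] at this
    rw [← hxuw] at this
    rw [hxn] at this
    simpa using this.symm
  -- cross terms vanish
  have hcross : (⟪x, T x⟫_ℂ).re = (⟪u, T u⟫_ℂ).re + (⟪w, T w⟫_ℂ).re := by
    have hTu : T u ∈ G := hinv u huG
    have h1 : ⟪T u, w⟫_ℂ = 0 := (Submodule.mem_orthogonal _ _).mp hwG (T u) hTu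
    have h2 : ⟪w, T u⟫_ℂ = 0 := by
      rw [← inner_conj_symm, h1, map_zero]
    have h3 : ⟪u, T w⟫_ℂ = 0 := by
      rw [← symmInner T hT u w, h1]
    rw [hxuw, map_add]
    rw [inner_add_left, inner_add_right, inner_add_right, h2, h3]
    simp
  have hray_u : (⟪u, T u⟫_ℂ).re ≤ a * ‖u‖ ^ 2 := by
    calc (⟪u, T u⟫_ℂ).re ≤ ‖T‖ * ‖u‖ ^ 2 := ray_le_gen T u
      _ ≤ a * ‖u‖ ^ 2 := by gcongr
  have hray_w : (⟪w, T w⟫_ℂ).re ≤ t' * ‖w‖ ^ 2 := hGperp w hwG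
  -- projection norm bound
  have hprojnorm : ‖u‖ ≤ ‖(Submodule.orthogonalProjectionOnto U x : H)‖ := by
    rcases eq_or_ne u 0 with h0 | h0
    · simp [h0]
    · have h1 : ⟪u, x - (Submodule.orthogonalProjectionOnto U x : H)⟫_ℂ = 0 := by
        rw [← inner_conj_symm]
        rw [show ⟪x - (Submodule.orthogonalProjectionOnto U x : H), u⟫_ℂ = 0 from Submodule.starProjection_inner_eq_zero x u huU]
        simp
      have h2 : ⟪u, (Submodule.orthogonalProjectionOnto U x : H)⟫_ℂ = ⟪u, x⟫_ℂ := by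
        have := inner_sub_right (𝕜 := ℂ) u x ((Submodule.orthogonalProjectionOnto U x : H))
        rw [h1] at this
        exact (sub_eq_zero.mp this.symm).symm
      have h3 : ⟪u, x⟫_ℂ = (‖u‖ : ℂ) ^ 2 := by
        rw [hxuw, inner_add_right, hinner_uw, add_zero, inner_self_eq_norm_sq_to_K]
        norm_num
      have h4 : ‖u‖ ^ 2 = ‖⟪u, (Submodule.orthogonalProjectionOnto U x : H)⟫_ℂ‖ := by
        rw [h2, h3]
        simp [← Complex.ofReal_pow]
      have h5 : ‖⟪u, (Submodule.orthogonalProjectionOnto U x : H)⟫_ℂ‖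
          ≤ ‖u‖ * ‖(Submodule.orthogonalProjectionOnto U x : H)‖ := norm_inner_le_norm _ _
      have hun : 0 < ‖u‖ := norm_pos_iff.mpr h0
      nlinarith
  have hfin : (⟪x, T' x⟫_ℂ).re ≤ max t' (-a) := by
    rw [hT' x, inner_projCLM_re, hcross]
    have hM1 : t' ≤ max t' (-a) := le_max_left _ _
    have hM2 : -a ≤ max t' (-a) := le_max_right _ _
    have h6 : ‖u‖ ^ 2 ≤ ‖(Submodule.orthogonalProjectionOnto U x : H)‖ ^ 2 := by
      nlinarith [hprojnorm, norm_nonneg u]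
    have h9 : a * ‖u‖ ^ 2 ≤ a * ‖(Submodule.orthogonalProjectionOnto U x : H)‖ ^ 2 :=
      mul_le_mul_of_nonneg_left h6 ha0
    have h7 : t' * ‖w‖ ^ 2 ≤ (max t' (-a)) * ‖w‖ ^ 2 :=
      mul_le_mul_of_nonneg_right hM1 (sq_nonneg _)
    have h8 : (-(max t' (-a))) * ‖u‖ ^ 2 ≤ a * ‖u‖ ^ 2 :=
      mul_le_mul_of_nonneg_right (by linarith) (sq_nonneg _)
    have h10 : (max t' (-a)) * ‖u‖ ^ 2 + (max t' (-a)) * ‖w‖ ^ 2 = max t' (-a) := by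
      rw [← mul_add, hpyth, mul_one]
    linarith [hray_u, hray_w, h6, h7, h8, h9, h10]
  linarith [hbx, hfin]

lemma exists_UZ (G : Submodule ℂ H) [FiniteDimensional ℂ G] (r : ℕ) (hr : 0 < r)
    (hrrank : (r : Cardinal) ≤ Module.rank ℂ H) :
    ∃ U Z : Submodule ℂ H, FiniteDimensional ℂ U ∧ FiniteDimensional ℂ Z ∧
      Module.finrank ℂ U = r ∧
      Module.finrank ℂ Z + r ≤ max (Module.finrank ℂ G) r ∧
      ∀ x : H, x ∈ Zᗮ → ((Submodule.orthogonalProjectionOnto G x : H) ∈ U) := by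
  set d := Module.finrank ℂ G with hd
  rcases le_or_gt d r with hcase | hcase
  · -- G small : extend G to U, Z = ⊥
    have hGperp_rank : ((r - d : ℕ) : Cardinal) ≤ Module.rank ℂ Gᗮ := by
      by_contra hlt
      push_neg at hlt
      obtain ⟨m, hm⟩ := Cardinal.lt_aleph0.mp (hlt.trans (Cardinal.nat_lt_aleph0 _))
      have hmlt : m < r - d := by
        have := hm ▸ hlt
        exact_mod_cast this
      haveI : FiniteDimensional ℂ Gᗮ :=
        Module.rank_lt_aleph0_iff.mp (hm ▸ Cardinal.nat_lt_aleph0 m)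
      have hfrperp : Module.finrank ℂ Gᗮ = m := by
        have := Module.finrank_eq_rank ℂ (Gᗮ : Submodule ℂ H)
        rw [hm] at this
        exact_mod_cast this
      have hsup : G ⊔ Gᗮ = ⊤ := Submodule.sup_orthogonal_of_hasOrthogonalProjection
      have hranktop : Module.rank ℂ (⊤ : Submodule ℂ H) ≤ ((d + m : ℕ) : Cardinal) := by
        rw [← hsup]
        refine (Submodule.rank_add_le_rank_add_rank G Gᗮ).trans ?_
        rw [← Module.finrank_eq_rank ℂ (G : Submodule ℂ H),
          ← Module.finrank_eq_rank ℂ (Gᗮ : Submodule ℂ H), hfrperp, ← hd]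
        norm_cast
      have h1 : (r : Cardinal) ≤ ((d + m : ℕ) : Cardinal) := by
        refine hrrank.trans ?_
        rw [← rank_top ℂ H]
        exact hranktop
      have : r ≤ d + m := by exact_mod_cast h1
      omega
    obtain ⟨W₁, hW₁le, hW₁fd, hW₁rank⟩ := exists_le_finrank Gᗮ (r - d) hGperp_rank
    haveI := hW₁fd
    have hinf : G ⊓ W₁ = ⊥ := by
      rw [← le_bot_iff]
      refine le_trans (inf_le_inf_left G hW₁le) ?_
      rw [(Submodule.orthogonal_disjoint G).eq_bot]
    refine ⟨G ⊔ W₁, ⊥, inferInstance, inferInstance, ?_, ?_, ?_⟩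
    · have := Submodule.finrank_sup_add_finrank_inf_eq G W₁
      rw [hinf, finrank_bot, hW₁rank, ← hd] at this
      omega
    · simp [finrank_bot]
    · intro x _
      exact Submodule.mem_sup_left (Submodule.orthogonalProjectionOnto G x).2
  · -- G big : take U inside G
    have hrankG : (r : Cardinal) ≤ Module.rank ℂ G := by
      rw [← Module.finrank_eq_rank ℂ (G : Submodule ℂ H)]
      exact_mod_cast le_of_lt hcase
    obtain ⟨U, hUle, hUfd, hUrank⟩ := exists_le_finrank G r hrankG
    haveI := hUfd
    set Z : Submodule ℂ H := G ⊓ Uᗮ with hZ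
    haveI : FiniteDimensional ℂ Z := Submodule.finiteDimensional_of_le inf_le_left
    have hUZinf : U ⊓ Z = ⊥ := by
      rw [← le_bot_iff]
      intro y hy
      have h1 : y ∈ U ⊓ Uᗮ := ⟨hy.1, hy.2.2⟩
      rwa [(Submodule.orthogonal_disjoint U).eq_bot] at h1
    have hUZsup : U ⊔ Z = G := by
      apply le_antisymm (sup_le hUle inf_le_left)
      intro x hxG
      have h1 : (Submodule.orthogonalProjectionOnto U x : H) ∈ U := (Submodule.orthogonalProjectionOnto U x).2
      have h2 : x - (Submodule.orthogonalProjectionOnto U x : H) ∈ Z :=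
        ⟨G.sub_mem hxG (hUle h1), Submodule.sub_starProjection_mem_orthogonal x⟩
      exact Submodule.mem_sup.mpr ⟨_, h1, _, h2, by abel⟩
    have hZrank : Module.finrank ℂ Z + r = d := by
      have := Submodule.finrank_sup_add_finrank_inf_eq U Z
      rw [hUZinf, hUZsup, finrank_bot, hUrank, ← hd] at this
      omega
    refine ⟨U, Z, hUfd, inferInstance, hUrank, by omega, ?_⟩
    intro x hxZ
    set u : H := (Submodule.orthogonalProjectionOnto G x : H) with hu
    have huG : u ∈ G := (Submodule.orthogonalProjectionOnto G x).2
    have huperpZ : ∀ z ∈ Z, ⟪z, u⟫_ℂ = 0 := by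
      intro z hz
      have hzG : z ∈ G := hz.1
      have h1 : ⟪z, x - u⟫_ℂ = 0 :=
        (Submodule.mem_orthogonal _ _).mp (Submodule.sub_starProjection_mem_orthogonal x) z hzG
      have h2 : ⟪z, x⟫_ℂ = 0 := (Submodule.mem_orthogonal _ _).mp hxZ z hz
      have := inner_sub_right (𝕜 := ℂ) z x u
      rw [h1, h2] at this
      simpa using this.symm
    have humem : u ∈ U ⊔ Z := hUZsup ▸ huG
    obtain ⟨u₁, hu₁, z₁, hz₁, hsum⟩ := Submodule.mem_sup.mp humem
    have hz₁u : ⟪z₁, u⟫_ℂ = 0 := huperpZ z₁ hz₁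
    have hz₁u₁ : ⟪z₁, u₁⟫_ℂ = 0 := by
      have h := (Submodule.mem_orthogonal _ _).mp hz₁.2 u₁ hu₁
      rw [← inner_conj_symm, h, map_zero]
    have hz₁z₁ : ⟪z₁, z₁⟫_ℂ = 0 := by
      have h := inner_add_right (𝕜 := ℂ) z₁ u₁ z₁
      rw [hsum, hz₁u, hz₁u₁] at h
      simpa using h.symm
    have hz₁0 : z₁ = 0 := inner_self_eq_zero.mp hz₁z₁
    rw [← hsum, hz₁0, add_zero]
    exact hu₁

lemma reOp_star_eq (X : H →L[ℂ] H) : reOp X = (2 : ℂ)⁻¹ • (X + star X) := by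
  rw [reOp, ContinuousLinearMap.star_eq_adjoint]

lemma reOp_isSelfAdjoint (B : H →L[ℂ] H) : IsSelfAdjoint (reOp B) := by
  rw [IsSelfAdjoint, reOp_star_eq, star_smul, star_add, star_star]
  have : star ((2:ℂ)⁻¹) = (2:ℂ)⁻¹ := by norm_num [Complex.star_def]
  rw [this]
  module

lemma reOp_norm_le (B : H →L[ℂ] H) : ‖reOp B‖ ≤ ‖B‖ := by
  rw [reOp_star_eq]
  calc ‖(2:ℂ)⁻¹ • (B + star B)‖ = ‖(2:ℂ)⁻¹‖ * ‖B + star B‖ := norm_smul _ _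
    _ ≤ ‖(2:ℂ)⁻¹‖ * (‖B‖ + ‖star B‖) := by gcongr; exact norm_add_le _ _
    _ = ‖B‖ := by rw [norm_star]; simp; ring

lemma reOp_smul_selfAdjoint (z : ℂ) (hz : star z = z) (P : H →L[ℂ] H)
    (hP : IsSelfAdjoint P) : reOp (z • P) = z • P := by
  rw [reOp_star_eq, star_smul, hz, hP.star_eq]
  module

lemma reOp_add' (X Y : H →L[ℂ] H) : reOp (X + Y) = reOp X + reOp Y := by
  rw [reOp_star_eq, reOp_star_eq, reOp_star_eq, star_add]
  module

lemma hard (T : H →L[ℂ] H) (hT : IsSelfAdjoint T) (k r : ℕ) (hr : 0 < r) (hrk : r < k)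
    (hk : (k : Cardinal) ≤ Module.rank ℂ H) (a t : ℝ) (hTa : ‖T‖ ≤ a)
    (ht : lambdaSA k T < t) :
    ∃ U : Submodule ℂ H, ∃ _ : FiniteDimensional ℂ U, Module.finrank ℂ U = r ∧
      ∀ T' : H →L[ℂ] H,
        (∀ x : H, (⟪x, T' x⟫_ℂ).re = (⟪x, T x⟫_ℂ).re - 2 * a * (⟪x, projCLM U x⟫_ℂ).re) →
        lambdaSA (k - r) T' < t := by
  have hk0 : 0 < k := by omega
  set t' := (lambdaSA k T + t) / 2 with ht'def
  have h1 : lambdaSA k T < t' := by rw [ht'def]; linarith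
  have h2 : t' < t := by rw [ht'def]; linarith
  have hmlam : -a ≤ lambdaSA k T :=
    le_trans (by linarith [hTa]) (neg_norm_le_lambdaSA k hk0 hk T)
  obtain ⟨G, hGfd, hGlt, hinv, hperp⟩ := exists_top_subspace T hT k hk0 hk t' h1
  haveI := hGfd
  have hrrank : (r : Cardinal) ≤ Module.rank ℂ H :=
    le_trans (by exact_mod_cast le_of_lt hrk) hk
  obtain ⟨U, Z, hUfd, hZfd, hUrank, hZbound, hproj⟩ := exists_UZ G r hr hrrank
  haveI := hUfd; haveI := hZfd
  refine ⟨U, hUfd, hUrank, ?_⟩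
  intro T' hT'
  have hmrank : ((k - r : ℕ) : Cardinal) ≤ Module.rank ℂ H :=
    le_trans (by exact_mod_cast Nat.sub_le k r) hk
  have hZlt : Module.finrank ℂ Z < k - r := by
    rcases max_cases (Module.finrank ℂ G) r with ⟨he, _⟩ | ⟨he, _⟩ <;> omega
  have hle := lambda_perturb_le T T' hT a t' hTa G U Z (k - r) (by omega) hmrank hZlt
    hinv hperp hproj hT'
  calc lambdaSA (k - r) T' ≤ max t' (-a) := hle
    _ < t := max_lt h2 (by linarith)

lemma xi'_mem (ξ : ℝ) (hξ : ξ ∈ Set.Ico (0 : ℝ) (2 * Real.pi)) :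
    (if ξ ≤ Real.pi then Real.pi - ξ else 3 * Real.pi - ξ) ∈ Set.Ico (0 : ℝ) (2 * Real.pi) := by
  obtain ⟨h0, h2⟩ := hξ
  have hpi := Real.pi_pos
  split_ifs with h
  · constructor <;> [linarith; linarith]
  · push_neg at h
    constructor <;> [linarith; linarith]

lemma xi'_phase (ξ : ℝ) :
    Complex.exp (ξ * Complex.I)
      * Complex.exp ((if ξ ≤ Real.pi then Real.pi - ξ else 3 * Real.pi - ξ : ℝ) * Complex.I)
      = -1 := by
  rw [← Complex.exp_add]
  split_ifs with h
  · have : (ξ : ℂ) * Complex.I + (↑(Real.pi - ξ)) * Complex.I = Real.pi * Complex.I := by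
      push_cast; ring
    rw [this, Complex.exp_pi_mul_I]
  · have : (ξ : ℂ) * Complex.I + (↑(3 * Real.pi - ξ)) * Complex.I
        = Real.pi * Complex.I + (2 * Real.pi) * Complex.I := by
      push_cast; ring
    rw [this, Complex.exp_add, Complex.exp_pi_mul_I, Complex.exp_two_pi_mul_I]
    ring


/-- For `1 ≤ r < k ≤ dim ℋ` and any collection `𝒮` of operators of rank at most `r`
containing `𝒮₀ = {2e^{iξ}‖A‖P : P a rank-r orthogonal projection, ξ ∈ [0,2π)}`,
`Ω_k(A)` is the intersection of the sets `Ω_{k-r}(A+F)` for `F ∈ 𝒮`. -/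
theorem omegaK_eq_iInter_perturbed
    (r k : ℕ) (hr : 1 ≤ r) (hrk : r < k) (hk : (k : Cardinal) ≤ Module.rank ℂ H)
    (A : H →L[ℂ] H) (S : Set (H →L[ℂ] H))
    (hSrank : ∀ F ∈ S, opRank F ≤ r)
    (hS0 : ∀ ξ ∈ Set.Ico (0 : ℝ) (2 * Real.pi), ∀ P : H →L[ℂ] H,
      IsOrthProj P → opRank P = r →
      ((2 * Complex.exp (ξ * Complex.I) * (‖A‖ : ℂ)) • P) ∈ S) :
    omegaK k A = ⋂ F ∈ S, omegaK (k - r) (A + F) := by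
  ext μ
  simp only [Set.mem_iInter]
  constructor
  · -- easy direction
    intro hμ F hF ξ hξ
    have h1 : (Complex.exp (ξ * Complex.I) * μ).re
        ≤ lambdaSA k (reOp (Complex.exp (ξ * Complex.I) • A)) := hμ ξ hξ
    refine h1.trans ?_
    rw [lambdaSA_eq_sSup, lambdaSA_eq_sSup]
    apply csSup_le_csSup (Sset_bddAbove (k - r) (by omega) _)
      ⟨_, neg_norm_mem_Sset k hk _⟩
    exact Sset_subset_perturb k r hrk _ A F (hSrank F hF)
  · -- hard direction
    intro hμ ξ hξ
    by_contra hcon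
    push_neg at hcon
    set c := Complex.exp (ξ * Complex.I) with hc
    set T := reOp (c • A) with hT
    have hTsa : IsSelfAdjoint T := reOp_isSelfAdjoint _
    have hTle : ‖T‖ ≤ ‖A‖ := by
      refine (reOp_norm_le _).trans ?_
      rw [norm_smul, hc, Complex.norm_exp_ofReal_mul_I, one_mul]
    obtain ⟨U, hUfd, hUrank, hkey⟩ := hard T hTsa k r hr hrk hk ‖A‖ _ hTle hcon
    haveI := hUfd
    set ξ' : ℝ := if ξ ≤ Real.pi then Real.pi - ξ else 3 * Real.pi - ξ with hξ'def
    set P : H →L[ℂ] H := projCLM U with hPdef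
    have hPS : ((2 * Complex.exp (ξ' * Complex.I) * (‖A‖ : ℂ)) • P) ∈ S :=
      hS0 ξ' (xi'_mem ξ hξ) P (projCLM_isOrthProj U) (by rw [hPdef, projCLM_opRank, hUrank])
    set F : H →L[ℂ] H := (2 * Complex.exp (ξ' * Complex.I) * (‖A‖ : ℂ)) • P with hFdef
    have h2 : (c * μ).re ≤ lambdaSA (k - r) (reOp (c • (A + F))) := hμ F hPS ξ hξ
    refine absurd h2 (not_le.mpr ?_)
    apply hkey
    intro x
    have hcF : c • F = ((-(2 * ‖A‖) : ℝ) : ℂ) • P := by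
      rw [hFdef, smul_smul]
      congr 1
      rw [show c * (2 * Complex.exp (ξ' * Complex.I) * (‖A‖ : ℂ))
          = 2 * (c * Complex.exp (ξ' * Complex.I)) * (‖A‖ : ℂ) by ring,
        hc, xi'_phase ξ]
      push_cast
      ring
    have hop : reOp (c • (A + F)) = T + ((-(2 * ‖A‖) : ℝ) : ℂ) • P := by
      rw [smul_add, reOp_add', hT, hcF]
      congr 1
      apply reOp_smul_selfAdjoint
      · simp [Complex.star_def]
      · exact (projCLM_isOrthProj U).1
    rw [hop]
    simp only [ContinuousLinearMap.add_apply, inner_add_right,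
      ContinuousLinearMap.smul_apply, inner_smul_right, Complex.add_re]
    rw [Complex.mul_re]
    simp only [Complex.ofReal_re, Complex.ofReal_im]
    ring
end
end

section
/- Let ℋ be a complex Hilbert space and let A ∈ B(ℋ) be normal. Suppose μ_m(A,t) ≤ 0 for some integer m ≥ 1 and some t ∈ ℝ, where μ_m(A,t) = λ_m((e^{−it}A − e^{it}A*)/(2i)). Then A admits an orthogonal decomposition A = A_1 ⊕ A_2 ⊕ Â such that dim A_1 < m, W(A_1) ⊆ e^{it}𝒫, W(A_2) ⊆ −e^{it}𝒫, and W(Â) ⊆ e^{it}ℝ, where 𝒫 = {z ∈ ℂ : Im(z) > 0} is the open upper half-plane. Furthermore, if λ_ℓ((e^{−it}Â + e^{it}Â*)/2) ≤ 0 for some ℓ ≥ 1, then Â admits a further orthogonal decomposition Â = A_3 ⊕ A_4 ⊕ 0 with dim A_3 < ℓ, W(A_3) ⊆ e^{it}(0,∞), and W(A_4) ⊆ e^{it}(−∞,0). Each summand may be zero-dimensional. -/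
set_option synthInstance.maxHeartbeats 1000000
set_option maxHeartbeats 4000000
set_option linter.unusedSectionVars false
set_option linter.unusedVariables false

noncomputable section

open scoped InnerProductSpace
open Complex

variable {H : Type*} [NormedAddCommGroup H] [InnerProductSpace ℂ H] [CompleteSpace H]

/-- The imaginary part `(T - T*)/(2i)` of an operator. -/
def imOp (T : H →L[ℂ] H) : H →L[ℂ] H :=
  (2 * Complex.I)⁻¹ • (T - ContinuousLinearMap.adjoint T)

/-- `λ_k` of the compression of `T` to the (invariant) subspace `V`: the supremum over
`k`-dimensional subspaces of `V` of the infimum of the Rayleigh quotient. -/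
def lambdaSub (k : ℕ) (T : H →L[ℂ] H) (V : Submodule ℂ H) : ℝ :=
  sSup { t : ℝ | ∃ W : Submodule ℂ H, W ≤ V ∧ Module.finrank ℂ W = k ∧
    ∀ x ∈ W, ‖x‖ = 1 → t ≤ (⟪x, T x⟫_ℂ).re }

section AuxLemmas

open ContinuousLinearMap

lemma myCommute_cfc {a b : H →L[ℂ] H} (ha : IsSelfAdjoint a) (hab : Commute b a)
    (f : ℝ → ℝ) (hf : Continuous f) : Commute b (cfc f a) := by
  have h1 : cfc f a = cfc (fun x : ℂ => (f x.re : ℂ)) a := cfc_real_eq_complex f ha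
  have hna : IsStarNormal a := ha.isStarNormal
  have hcont : ContinuousOn (fun x : ℂ => (f x.re : ℂ)) (spectrum ℂ a) :=
    (Complex.continuous_ofReal.comp (hf.comp Complex.continuous_re)).continuousOn
  have hmem : cfc (fun x : ℂ => (f x.re : ℂ)) a ∈ StarAlgebra.elemental ℂ a := by
    rw [cfc_apply (fun x : ℂ => (f x.re : ℂ)) a hna hcont, cfcHom_eq_of_isStarNormal a]
    exact Subtype.coe_prop _
  rw [h1]
  have hab' : Commute b (star a) := by rw [ha.star_eq]; exact hab
  refine StarAlgebra.elemental.induction_on (P := fun u _ => Commute b u) (hy := hmem)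
    (self := hab) (star_self := hab') (algebraMap := fun r => (Algebra.commutes r b).symm)
    (add := fun u _ v _ hu hv => hu.add_right hv)
    (mul := fun u _ v _ hu hv => hu.mul_right hv)
    (closure := fun s hs hsc v hv => ?_)
  have hcl : IsClosed {u : H →L[ℂ] H | Commute b u} :=
    isClosed_eq (continuous_mul_left b) (continuous_mul_right b)
  exact hcl.closure_subset_iff.mpr (fun u hu => hsc u hu) hv

lemma myCommute_posPart {a b : H →L[ℂ] H} (ha : IsSelfAdjoint a) (hab : Commute b a) :
    Commute b (a⁺) := by
  rw [CFC.posPart_def, cfcₙ_eq_cfc]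
  exact myCommute_cfc ha hab _ continuous_posPart

lemma myCommute_negPart {a b : H →L[ℂ] H} (ha : IsSelfAdjoint a) (hab : Commute b a) :
    Commute b (a⁻) := by
  rw [CFC.negPart_def, cfcₙ_eq_cfc]
  exact myCommute_cfc ha hab _ continuous_negPart

lemma myInner_mul_apply (S S' : H →L[ℂ] H) (x : H) : (S * S') x = S (S' x) := rfl

lemma mySA_inner_move {S : H →L[ℂ] H} (hS : IsSelfAdjoint S) (x y : H) :
    ⟪S x, y⟫_ℂ = ⟪x, S y⟫_ℂ := by
  nth_rewrite 1 [← hS.adjoint_eq]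
  exact ContinuousLinearMap.adjoint_inner_left S y x

lemma myPos_inner_zero {S : H →L[ℂ] H} (hS : 0 ≤ S) {x : H} (h : ⟪x, S x⟫_ℂ = 0) :
    S x = 0 := by
  have hss : CFC.sqrt S * CFC.sqrt S = S := by simpa [sq] using CFC.sq_sqrt (a := S) hS
  have hsa : IsSelfAdjoint (CFC.sqrt S) := IsSelfAdjoint.of_nonneg (CFC.sqrt_nonneg S)
  have h2 : ⟪CFC.sqrt S x, CFC.sqrt S x⟫_ℂ = ⟪x, S x⟫_ℂ := by
    rw [mySA_inner_move hsa, ← myInner_mul_apply, hss]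
  have h3 : CFC.sqrt S x = 0 := inner_self_eq_zero.mp (h2.trans h)
  rw [← hss, myInner_mul_apply, h3, map_zero]

lemma myInner_im_zero {S : H →L[ℂ] H} (hS : IsSelfAdjoint S) (x : H) :
    (⟪x, S x⟫_ℂ).im = 0 := by
  have h1 : (starRingEnd ℂ) ⟪x, S x⟫_ℂ = ⟪x, S x⟫_ℂ := by
    rw [inner_conj_symm, mySA_inner_move hS]
  exact Complex.conj_eq_iff_im.mp h1

lemma myPosPart_mul_self {S : H →L[ℂ] H} (hS : IsSelfAdjoint S) : S⁺ * S⁺ = S⁺ * S := by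
  calc S⁺ * S⁺ = S⁺ * S⁺ - S⁺ * S⁻ := by rw [CFC.posPart_mul_negPart, sub_zero]
  _ = S⁺ * (S⁺ - S⁻) := by rw [mul_sub]
  _ = S⁺ * S := by rw [CFC.posPart_sub_negPart S hS]

lemma myKer_le_posPart {S : H →L[ℂ] H} (hS : IsSelfAdjoint S) :
    S.ker ≤ (S⁺).ker := by
  intro x hx
  rw [LinearMap.mem_ker, ContinuousLinearMap.coe_coe] at hx ⊢
  have hsa : IsSelfAdjoint (S⁺) := IsSelfAdjoint.of_nonneg (CFC.posPart_nonneg S)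
  have h2 : ⟪S⁺ x, S⁺ x⟫_ℂ = 0 := by
    rw [mySA_inner_move hsa, ← myInner_mul_apply, myPosPart_mul_self hS,
      myInner_mul_apply, hx, map_zero, inner_zero_right]
  exact inner_self_eq_zero.mp h2

lemma myKer_le_negPart {S : H →L[ℂ] H} (hS : IsSelfAdjoint S) :
    S.ker ≤ (S⁻).ker := by
  have h := myKer_le_posPart (S := -S) hS.neg
  rw [CFC.posPart_neg] at h
  intro x hx
  rw [LinearMap.mem_ker, ContinuousLinearMap.coe_coe] at hx
  exact h (by rw [LinearMap.mem_ker]; simp [hx])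

lemma myOrthKer_le_ker {S S' : H →L[ℂ] H} (hS : IsSelfAdjoint S) (h0 : S' * S = 0) :
    (S.ker)ᗮ ≤ S'.ker := by
  have hk : S.ker = (LinearMap.range (S : H →ₗ[ℂ] H))ᗮ := by
    ext x
    rw [LinearMap.mem_ker, ContinuousLinearMap.coe_coe, Submodule.mem_orthogonal]
    constructor
    · rintro hx _ ⟨y, rfl⟩
      rw [ContinuousLinearMap.coe_coe, mySA_inner_move hS, hx, inner_zero_right]
    · intro h
      have h2 := h (S (S x)) ⟨S x, rfl⟩
      have h3 : ⟪S x, S x⟫_ℂ = 0 :=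
        (mySA_inner_move hS (S x) x).symm.trans h2
      exact inner_self_eq_zero.mp h3
  rw [hk, Submodule.orthogonal_orthogonal_eq_closure]
  refine Submodule.topologicalClosure_minimal _ ?_ (ContinuousLinearMap.isClosed_ker S')
  rintro _ ⟨y, rfl⟩
  rw [LinearMap.mem_ker, ContinuousLinearMap.coe_coe, ContinuousLinearMap.coe_coe, ← myInner_mul_apply, h0]
  rfl

lemma myKer_inv {C S : H →L[ℂ] H} (h : Commute C S) :
    ∀ x ∈ S.ker, C x ∈ S.ker := by
  intro x hx
  rw [LinearMap.mem_ker, ContinuousLinearMap.coe_coe] at hx ⊢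
  rw [← myInner_mul_apply, ← h, myInner_mul_apply, hx, map_zero]

lemma myOrth_inv {C : H →L[ℂ] H} {K : Submodule ℂ H}
    (h : ∀ x ∈ K, ContinuousLinearMap.adjoint C x ∈ K) :
    ∀ x ∈ Kᗮ, C x ∈ Kᗮ := by
  intro x hx
  rw [Submodule.mem_orthogonal] at hx ⊢
  intro u hu
  rw [← ContinuousLinearMap.adjoint_inner_left]
  exact hx _ (h u hu)

lemma myPos_on_V1 {S : H →L[ℂ] H} (hS : IsSelfAdjoint S) {x : H}
    (hx : x ∈ ((S⁺).ker)ᗮ) (hn : ‖x‖ = 1) : 0 < (⟪x, S x⟫_ℂ).re := by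
  have hTp : (0 : H →L[ℂ] H) ≤ S⁺ := CFC.posPart_nonneg S
  have hTpsa : IsSelfAdjoint (S⁺) := IsSelfAdjoint.of_nonneg hTp
  have hxneg : x ∈ (S⁻).ker :=
    myOrthKer_le_ker hTpsa (CFC.negPart_mul_posPart S) hx
  rw [LinearMap.mem_ker, ContinuousLinearMap.coe_coe] at hxneg
  have hSx : S x = S⁺ x := by
    conv_lhs => rw [← CFC.posPart_sub_negPart S hS]
    rw [ContinuousLinearMap.sub_apply, hxneg, sub_zero]
  rw [hSx]
  have hnonneg : 0 ≤ (⟪x, S⁺ x⟫_ℂ).re := by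
    have := ((ContinuousLinearMap.nonneg_iff_isPositive _).mp hTp).inner_nonneg_right x
    simpa using (Complex.le_def.mp this).1
  rcases hnonneg.lt_or_eq with h | h
  · exact h
  · exfalso
    have hinner : ⟪x, S⁺ x⟫_ℂ = 0 := by
      apply Complex.ext
      · exact h.symm
      · exact myInner_im_zero hTpsa x
    have hker : x ∈ (S⁺).ker := by
      rw [LinearMap.mem_ker]; exact myPos_inner_zero hTp hinner
    have hxx : ⟪x, x⟫_ℂ = 0 := (Submodule.mem_orthogonal _ x).mp hx x hker
    have hx0 : x = 0 := inner_self_eq_zero.mp hxx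
    rw [hx0, norm_zero] at hn
    norm_num at hn

lemma myNeg_on_V2 {S : H →L[ℂ] H} (hS : IsSelfAdjoint S) {x : H}
    (hx : x ∈ ((S⁻).ker)ᗮ) (hn : ‖x‖ = 1) : (⟪x, S x⟫_ℂ).re < 0 := by
  have h := myPos_on_V1 (S := -S) hS.neg (by rw [CFC.posPart_neg]; exact hx) hn
  have h2 : ⟪x, (-S) x⟫_ℂ = -⟪x, S x⟫_ℂ := by
    rw [ContinuousLinearMap.neg_apply, inner_neg_right]
  rw [h2] at h
  simp only [Complex.neg_re] at h
  linarith

lemma myExists_unit {V : Submodule ℂ H} (h : 0 < Module.finrank ℂ V) :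
    ∃ x ∈ V, ‖x‖ = 1 := by
  have : Nontrivial V := Module.nontrivial_of_finrank_pos h
  obtain ⟨v, hv⟩ := exists_ne (0 : V)
  have hvH : (v : H) ≠ 0 := fun hc => hv (Subtype.ext hc)
  refine ⟨(‖(v : H)‖ : ℂ)⁻¹ • (v : H), V.smul_mem _ v.2, ?_⟩
  rw [norm_smul, norm_inv, Complex.norm_real, norm_norm]
  field_simp [norm_ne_zero_iff.mpr hvH]

lemma myGood_subspace {S : H →L[ℂ] H} {U : Submodule ℂ H} {k : ℕ} (hk : 1 ≤ k)
    (hpos : ∀ x ∈ U, ‖x‖ = 1 → 0 < (⟪x, S x⟫_ℂ).re)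
    (hrank : (k : Cardinal) ≤ Module.rank ℂ U) :
    ∃ W : Submodule ℂ H, W ≤ U ∧ Module.finrank ℂ W = k ∧
      ∃ c : ℝ, 0 < c ∧ ∀ x ∈ W, ‖x‖ = 1 → c ≤ (⟪x, S x⟫_ℂ).re := by
  obtain ⟨f, hf⟩ := exists_linearIndependent_of_le_rank (M := ↥U) (n := k) hrank
  have hg : LinearIndependent ℂ (fun i : Fin k => ((f i : H))) :=
    hf.map' U.subtype U.ker_subtype
  set W : Submodule ℂ H := Submodule.span ℂ (Set.range fun i : Fin k => ((f i : H))) with hW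
  have hWU : W ≤ U := by
    rw [hW, Submodule.span_le]
    rintro _ ⟨i, rfl⟩
    exact (f i).2
  have hfin : Module.finrank ℂ W = k := by
    rw [hW, finrank_span_eq_card hg, Fintype.card_fin]
  haveI : FiniteDimensional ℂ W := FiniteDimensional.span_of_finite ℂ (Set.finite_range _)
  have hcompact : IsCompact (Metric.sphere (0 : W) 1) := isCompact_sphere 0 1
  have hne : (Metric.sphere (0 : W) 1).Nonempty := by
    obtain ⟨x, hxW, hx1⟩ := myExists_unit (by rw [hfin]; omega)
    exact ⟨⟨x, hxW⟩, by simpa [mem_sphere_iff_norm] using hx1⟩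
  have hcont : Continuous fun w : W => (⟪(w : H), S w⟫_ℂ).re :=
    Complex.continuous_re.comp
      ((continuous_subtype_val).inner (S.continuous.comp continuous_subtype_val))
  obtain ⟨w₀, hw₀, hmin⟩ := hcompact.exists_isMinOn hne hcont.continuousOn
  have hw₀n : ‖(w₀ : H)‖ = 1 := by simpa [mem_sphere_iff_norm] using hw₀
  refine ⟨W, hWU, hfin, (⟪(w₀ : H), S w₀⟫_ℂ).re, hpos _ (hWU w₀.2) hw₀n, ?_⟩
  intro x hxW hx1
  exact hmin (by simpa [mem_sphere_iff_norm] using hx1 : (⟨x, hxW⟩ : W) ∈ Metric.sphere 0 1)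

lemma myBddAbove (S : H →L[ℂ] H) {k : ℕ} (hk : 1 ≤ k) :
    BddAbove { t : ℝ | ∃ V : Submodule ℂ H, Module.finrank ℂ V = k ∧
      ∀ x ∈ V, ‖x‖ = 1 → t ≤ (⟪x, S x⟫_ℂ).re } := by
  refine ⟨‖S‖, ?_⟩
  rintro s ⟨V, hV, hVt⟩
  obtain ⟨x, hxV, hx1⟩ := myExists_unit (by omega : 0 < Module.finrank ℂ V)
  refine (hVt x hxV hx1).trans ?_
  calc (⟪x, S x⟫_ℂ).re ≤ ‖⟪x, S x⟫_ℂ‖ := Complex.re_le_norm _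
  _ = ‖⟪x, S x⟫_ℂ‖ := rfl
  _ ≤ ‖x‖ * ‖S x‖ := norm_inner_le_norm x (S x)
  _ ≤ ‖x‖ * (‖S‖ * ‖x‖) := by gcongr; exact S.le_opNorm x
  _ = ‖S‖ := by rw [hx1]; ring

lemma myBddAboveSub (S : H →L[ℂ] H) (U : Submodule ℂ H) {k : ℕ} (hk : 1 ≤ k) :
    BddAbove { t : ℝ | ∃ W : Submodule ℂ H, W ≤ U ∧ Module.finrank ℂ W = k ∧
      ∀ x ∈ W, ‖x‖ = 1 → t ≤ (⟪x, S x⟫_ℂ).re } := by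
  refine ⟨‖S‖, ?_⟩
  rintro s ⟨V, hVU, hV, hVt⟩
  obtain ⟨x, hxV, hx1⟩ := myExists_unit (by omega : 0 < Module.finrank ℂ V)
  refine (hVt x hxV hx1).trans ?_
  calc (⟪x, S x⟫_ℂ).re ≤ ‖⟪x, S x⟫_ℂ‖ := Complex.re_le_norm _
  _ = ‖⟪x, S x⟫_ℂ‖ := rfl
  _ ≤ ‖x‖ * ‖S x‖ := norm_inner_le_norm x (S x)
  _ ≤ ‖x‖ * (‖S‖ * ‖x‖) := by gcongr; exact S.le_opNorm x
  _ = ‖S‖ := by rw [hx1]; ring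

lemma myReIm (B : H →L[ℂ] H) : reOp B + Complex.I • imOp B = B := by
  rw [reOp, imOp, smul_smul]
  have h2 : Complex.I * (2 * Complex.I)⁻¹ = (2:ℂ)⁻¹ := by
    rw [mul_inv, Complex.inv_I]
    ring_nf
    simp [Complex.I_sq]
    norm_num
  rw [h2, ← smul_add]
  have h3 : (B + ContinuousLinearMap.adjoint B) + (B - ContinuousLinearMap.adjoint B)
      = (2:ℂ) • B := by
    rw [two_smul]; abel
  rw [h3, smul_smul]
  norm_num

end AuxLemmas

/-- Decomposition lemma for normal operators.  If `A` is normal and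
`μ_m(A,t) = λ_m((e^{-it}A - e^{it}A^*)/(2i)) ≤ 0` for some `m ≥ 1` and `t ∈ ℝ`, then
`ℋ` decomposes orthogonally as `V₁ ⊕ V₂ ⊕ V₃`, each summand invariant under `A` and
`A*`, with `dim V₁ < m`, the numerical range of `A` restricted to `V₁` (resp. `V₂`,
`V₃`) contained in `e^{it}𝒫` (resp. `-e^{it}𝒫`, `e^{it}ℝ`).  Furthermore, whenever
`λ_ℓ((e^{-it}Â + e^{it}Â^*)/2) ≤ 0` for the restriction `Â` of `A` to `V₃` and some
`ℓ ≥ 1`, then `V₃` decomposes further as `V₄ ⊕ V₅ ⊕ V₆` with `dim V₄ < ℓ`, the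
numerical ranges of the restrictions to `V₄`, `V₅` contained in `e^{it}(0,∞)`,
`e^{it}(-∞,0)` respectively, and `A` vanishing on `V₆`. -/
theorem normal_decomposition_of_mu_nonpos
    (A : H →L[ℂ] H)
    (hA : ContinuousLinearMap.adjoint A ∘L A = A ∘L ContinuousLinearMap.adjoint A)
    (m : ℕ) (hm : 1 ≤ m) (t : ℝ)
    (hmu : lambdaSA m (imOp (Complex.exp (-(t : ℂ) * Complex.I) • A)) ≤ 0) :
    ∃ V₁ V₂ V₃ : Submodule ℂ H,
      IsClosed (V₁ : Set H) ∧ IsClosed (V₂ : Set H) ∧ IsClosed (V₃ : Set H) ∧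
      (∀ x ∈ V₁, ∀ y ∈ V₂, ⟪x, y⟫_ℂ = 0) ∧
      (∀ x ∈ V₁, ∀ y ∈ V₃, ⟪x, y⟫_ℂ = 0) ∧
      (∀ x ∈ V₂, ∀ y ∈ V₃, ⟪x, y⟫_ℂ = 0) ∧
      V₁ ⊔ V₂ ⊔ V₃ = ⊤ ∧
      (∀ x ∈ V₁, A x ∈ V₁ ∧ ContinuousLinearMap.adjoint A x ∈ V₁) ∧
      (∀ x ∈ V₂, A x ∈ V₂ ∧ ContinuousLinearMap.adjoint A x ∈ V₂) ∧
      (∀ x ∈ V₃, A x ∈ V₃ ∧ ContinuousLinearMap.adjoint A x ∈ V₃) ∧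
      Module.rank ℂ V₁ < m ∧
      (∀ x ∈ V₁, ‖x‖ = 1 → 0 < (Complex.exp (-(t : ℂ) * Complex.I) * ⟪x, A x⟫_ℂ).im) ∧
      (∀ x ∈ V₂, ‖x‖ = 1 → (Complex.exp (-(t : ℂ) * Complex.I) * ⟪x, A x⟫_ℂ).im < 0) ∧
      (∀ x ∈ V₃, ‖x‖ = 1 → (Complex.exp (-(t : ℂ) * Complex.I) * ⟪x, A x⟫_ℂ).im = 0) ∧
      (∀ ℓ : ℕ, 1 ≤ ℓ →
        lambdaSub ℓ (reOp (Complex.exp (-(t : ℂ) * Complex.I) • A)) V₃ ≤ 0 →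
        ∃ V₄ V₅ V₆ : Submodule ℂ H,
          V₄ ≤ V₃ ∧ V₅ ≤ V₃ ∧ V₆ ≤ V₃ ∧
          IsClosed (V₄ : Set H) ∧ IsClosed (V₅ : Set H) ∧ IsClosed (V₆ : Set H) ∧
          (∀ x ∈ V₄, ∀ y ∈ V₅, ⟪x, y⟫_ℂ = 0) ∧
          (∀ x ∈ V₄, ∀ y ∈ V₆, ⟪x, y⟫_ℂ = 0) ∧
          (∀ x ∈ V₅, ∀ y ∈ V₆, ⟪x, y⟫_ℂ = 0) ∧
          V₄ ⊔ V₅ ⊔ V₆ = V₃ ∧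
          (∀ x ∈ V₄, A x ∈ V₄ ∧ ContinuousLinearMap.adjoint A x ∈ V₄) ∧
          (∀ x ∈ V₅, A x ∈ V₅ ∧ ContinuousLinearMap.adjoint A x ∈ V₅) ∧
          (∀ x ∈ V₆, A x ∈ V₆ ∧ ContinuousLinearMap.adjoint A x ∈ V₆) ∧
          Module.rank ℂ V₄ < ℓ ∧
          (∀ x ∈ V₄, ‖x‖ = 1 →
            (Complex.exp (-(t : ℂ) * Complex.I) * ⟪x, A x⟫_ℂ).im = 0 ∧
            0 < (Complex.exp (-(t : ℂ) * Complex.I) * ⟪x, A x⟫_ℂ).re) ∧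
          (∀ x ∈ V₅, ‖x‖ = 1 →
            (Complex.exp (-(t : ℂ) * Complex.I) * ⟪x, A x⟫_ℂ).im = 0 ∧
            (Complex.exp (-(t : ℂ) * Complex.I) * ⟪x, A x⟫_ℂ).re < 0) ∧
          (∀ x ∈ V₆, A x = 0)) := by
  classical
  set e : ℂ := Complex.exp (-(t : ℂ) * Complex.I) with he
  have he0 : e ≠ 0 := Complex.exp_ne_zero _
  set T : H →L[ℂ] H := imOp (e • A) with hTdef
  set R : H →L[ℂ] H := reOp (e • A) with hRdef
  -- self-adjointness
  have hstar2I : star ((2 * Complex.I)⁻¹ : ℂ) = -((2 * Complex.I)⁻¹ : ℂ) := by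
    simp [Complex.ext_iff]
  have hsaT : IsSelfAdjoint T := by
    rw [hTdef, imOp, IsSelfAdjoint, star_smul, star_sub,
      ContinuousLinearMap.star_eq_adjoint, ContinuousLinearMap.star_eq_adjoint,
      ContinuousLinearMap.adjoint_adjoint, hstar2I, neg_smul, ← smul_neg, neg_sub]
  have hsaR : IsSelfAdjoint R := by
    rw [hRdef, reOp, IsSelfAdjoint, star_smul, star_add,
      ContinuousLinearMap.star_eq_adjoint, ContinuousLinearMap.star_eq_adjoint,
      ContinuousLinearMap.adjoint_adjoint]
    have : star ((2:ℂ)⁻¹) = ((2:ℂ)⁻¹) := by norm_num [Complex.ext_iff]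
    rw [this, add_comm]
  -- commutation
  have hAA' : Commute A (ContinuousLinearMap.adjoint A) := hA.symm
  have hcomm : ∀ C : H →L[ℂ] H, Commute C A → Commute C (ContinuousLinearMap.adjoint A) →
      Commute C T ∧ Commute C R := by
    intro C h1 h2
    have hB : Commute C (e • A) := h1.smul_right e
    have hB' : Commute C (ContinuousLinearMap.adjoint (e • A)) := by
      rw [← ContinuousLinearMap.star_eq_adjoint, star_smul,
        ContinuousLinearMap.star_eq_adjoint]
      exact h2.smul_right _
    exact ⟨by rw [hTdef, imOp]; exact (hB.sub_right hB').smul_right _,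
      by rw [hRdef, reOp]; exact (hB.add_right hB').smul_right _⟩
  obtain ⟨hAT, hAR⟩ := hcomm A (Commute.refl A) hAA'
  obtain ⟨hA'T, hA'R⟩ := hcomm (ContinuousLinearMap.adjoint A) hAA'.symm (Commute.refl _)
  obtain ⟨hRT, _⟩ := hcomm R hAR.symm hA'R.symm
  -- pointwise decomposition of the inner product
  have hsum : R + Complex.I • T = e • A := by rw [hTdef, hRdef]; exact myReIm (e • A)
  have key : ∀ x : H, e * ⟪x, A x⟫_ℂ = ⟪x, R x⟫_ℂ + Complex.I * ⟪x, T x⟫_ℂ := by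
    intro x
    have h1 : (R + Complex.I • T) x = (e • A) x := by rw [hsum]
    rw [ContinuousLinearMap.add_apply, ContinuousLinearMap.smul_apply,
      ContinuousLinearMap.smul_apply] at h1
    calc e * ⟪x, A x⟫_ℂ = ⟪x, e • A x⟫_ℂ := (inner_smul_right x (A x) e).symm
    _ = ⟪x, R x + Complex.I • T x⟫_ℂ := by rw [h1]
    _ = ⟪x, R x⟫_ℂ + Complex.I * ⟪x, T x⟫_ℂ := by
        rw [inner_add_right, inner_smul_right]
  have imkey : ∀ x : H, (e * ⟪x, A x⟫_ℂ).im = (⟪x, T x⟫_ℂ).re := by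
    intro x
    rw [key x, Complex.add_im, Complex.mul_im, myInner_im_zero hsaR, myInner_im_zero hsaT]
    simp
  have rekey : ∀ x : H, (e * ⟪x, A x⟫_ℂ).re = (⟪x, R x⟫_ℂ).re := by
    intro x
    rw [key x, Complex.add_re, Complex.mul_re, myInner_im_zero hsaT]
    simp
  -- the three subspaces
  set V₁ : Submodule ℂ H := ((T⁺).ker)ᗮ with hV₁
  set V₂ : Submodule ℂ H := ((T⁻).ker)ᗮ with hV₂
  set V₃ : Submodule ℂ H := T.ker with hV₃
  haveI : CompleteSpace ((T⁺).ker) :=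
    (ContinuousLinearMap.isClosed_ker (T⁺)).completeSpace_coe
  haveI : CompleteSpace ((T⁻).ker) :=
    (ContinuousLinearMap.isClosed_ker (T⁻)).completeSpace_coe
  haveI : CompleteSpace V₃ := (ContinuousLinearMap.isClosed_ker T).completeSpace_coe
  have hsaTp : IsSelfAdjoint (T⁺) := IsSelfAdjoint.of_nonneg (CFC.posPart_nonneg T)
  have hsaTm : IsSelfAdjoint (T⁻) := IsSelfAdjoint.of_nonneg (CFC.negPart_nonneg T)
  -- inclusion facts
  have hV₁Tm : V₁ ≤ (T⁻).ker :=
    myOrthKer_le_ker hsaTp (CFC.negPart_mul_posPart T)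
  have hV₂Tp : V₂ ≤ (T⁺).ker :=
    myOrthKer_le_ker hsaTm (CFC.posPart_mul_negPart T)
  have hV₃Tp : V₃ ≤ (T⁺).ker := myKer_le_posPart hsaT
  have hV₃Tm : V₃ ≤ (T⁻).ker := myKer_le_negPart hsaT
  -- orthogonality
  have h12 : ∀ x ∈ V₁, ∀ y ∈ V₂, ⟪x, y⟫_ℂ = 0 := by
    intro x hx y hy
    exact (Submodule.mem_orthogonal _ y).mp hy x (hV₁Tm hx)
  have h13 : ∀ x ∈ V₁, ∀ y ∈ V₃, ⟪x, y⟫_ℂ = 0 := by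
    intro x hx y hy
    rw [inner_eq_zero_symm]
    exact (Submodule.mem_orthogonal _ x).mp hx y (hV₃Tp hy)
  have h23 : ∀ x ∈ V₂, ∀ y ∈ V₃, ⟪x, y⟫_ℂ = 0 := by
    intro x hx y hy
    rw [inner_eq_zero_symm]
    exact (Submodule.mem_orthogonal _ x).mp hx y (hV₃Tm hy)
  -- sup = top
  have hsuptop : V₁ ⊔ V₂ ⊔ V₃ = ⊤ := by
    rw [eq_top_iff]
    intro x _
    obtain ⟨y, hy, z, hz, hxyz⟩ :=
      ((T⁺).ker).exists_add_mem_mem_orthogonal x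
    obtain ⟨u, hu, w, hw, hyuw⟩ :=
      ((T⁻).ker).exists_add_mem_mem_orthogonal y
    have hwTp : w ∈ (T⁺).ker := hV₂Tp hw
    have huTp : u ∈ (T⁺).ker := by
      have : u = y - w := by rw [hyuw]; abel
      rw [this]
      exact Submodule.sub_mem _ hy hwTp
    have huV₃ : u ∈ V₃ := by
      rw [hV₃, LinearMap.mem_ker, ContinuousLinearMap.coe_coe]
      rw [LinearMap.mem_ker, ContinuousLinearMap.coe_coe] at hu huTp
      have : T u = T⁺ u - T⁻ u := by
        conv_lhs => rw [← CFC.posPart_sub_negPart T hsaT]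
        rw [ContinuousLinearMap.sub_apply]
      rw [this, huTp, hu, sub_zero]
    have : x = z + w + u := by rw [hxyz, hyuw]; abel
    rw [this]
    exact Submodule.add_mem _
      (Submodule.add_mem _
        (Submodule.mem_sup_left (Submodule.mem_sup_left hz))
        (Submodule.mem_sup_left (Submodule.mem_sup_right hw)))
      (Submodule.mem_sup_right huV₃)
  -- invariance
  have hinvK : ∀ (S : H →L[ℂ] H), Commute A S → Commute (ContinuousLinearMap.adjoint A) S →
      (∀ x ∈ S.ker, A x ∈ S.ker ∧
        ContinuousLinearMap.adjoint A x ∈ S.ker) := by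
    intro S h1 h2 x hx
    exact ⟨myKer_inv h1 x hx, myKer_inv h2 x hx⟩
  have hinvOrth : ∀ K : Submodule ℂ H,
      (∀ x ∈ K, A x ∈ K ∧ ContinuousLinearMap.adjoint A x ∈ K) →
      (∀ x ∈ Kᗮ, A x ∈ Kᗮ ∧ ContinuousLinearMap.adjoint A x ∈ Kᗮ) := by
    intro K h x hx
    refine ⟨myOrth_inv (fun y hy => (h y hy).2) x hx, myOrth_inv ?_ x hx⟩
    intro y hy
    rw [ContinuousLinearMap.adjoint_adjoint]
    exact (h y hy).1
  have hinv1 : ∀ x ∈ V₁, A x ∈ V₁ ∧ ContinuousLinearMap.adjoint A x ∈ V₁ :=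
    hinvOrth _ (hinvK (T⁺) (myCommute_posPart hsaT hAT) (myCommute_posPart hsaT hA'T))
  have hinv2 : ∀ x ∈ V₂, A x ∈ V₂ ∧ ContinuousLinearMap.adjoint A x ∈ V₂ :=
    hinvOrth _ (hinvK (T⁻) (myCommute_negPart hsaT hAT) (myCommute_negPart hsaT hA'T))
  have hinv3 : ∀ x ∈ V₃, A x ∈ V₃ ∧ ContinuousLinearMap.adjoint A x ∈ V₃ :=
    hinvK T hAT hA'T
  -- sign conditions
  have hsign1 : ∀ x ∈ V₁, ‖x‖ = 1 → 0 < (e * ⟪x, A x⟫_ℂ).im := by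
    intro x hx hn
    rw [imkey x]
    exact myPos_on_V1 hsaT hx hn
  have hsign2 : ∀ x ∈ V₂, ‖x‖ = 1 → (e * ⟪x, A x⟫_ℂ).im < 0 := by
    intro x hx hn
    rw [imkey x]
    exact myNeg_on_V2 hsaT hx hn
  have hsign3 : ∀ x ∈ V₃, ‖x‖ = 1 → (e * ⟪x, A x⟫_ℂ).im = 0 := by
    intro x hx hn
    rw [imkey x]
    rw [hV₃, LinearMap.mem_ker, ContinuousLinearMap.coe_coe] at hx
    rw [hx, inner_zero_right]
    simp
  -- rank bound
  have hrank1 : Module.rank ℂ V₁ < m := by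
    by_contra hcon
    push_neg at hcon
    obtain ⟨W, hWU, hWfin, c, hc0, hc⟩ :=
      myGood_subspace (S := T) hm (fun x hx hn => myPos_on_V1 hsaT hx hn) hcon
    have hmem : c ∈ { s : ℝ | ∃ V : Submodule ℂ H, Module.finrank ℂ V = m ∧
        ∀ x ∈ V, ‖x‖ = 1 → s ≤ (⟪x, T x⟫_ℂ).re } := ⟨W, hWfin, hc⟩
    have hle : c ≤ lambdaSA m T := le_csSup (myBddAbove T hm) hmem
    rw [lambdaSA] at hmu
    have : lambdaSA m T = sSup { s : ℝ | ∃ V : Submodule ℂ H, Module.finrank ℂ V = m ∧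
        ∀ x ∈ V, ‖x‖ = 1 → s ≤ (⟪x, T x⟫_ℂ).re } := rfl
    linarith [hle.trans hmu]
  refine ⟨V₁, V₂, V₃, Submodule.isClosed_orthogonal _, Submodule.isClosed_orthogonal _,
    ContinuousLinearMap.isClosed_ker T, h12, h13, h23, hsuptop, hinv1, hinv2, hinv3,
    hrank1, hsign1, hsign2, hsign3, ?_⟩
  -- second part
  intro ℓ hℓ hlam
  set Q : H →L[ℂ] H := V₃.subtypeL ∘L V₃.orthogonalProjectionOnto with hQdef
  have hQsa : IsSelfAdjoint Q := isSelfAdjoint_starProjection V₃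
  have hQid : ∀ x ∈ V₃, Q x = x := by
    intro x hx
    show (V₃.orthogonalProjectionOnto x : H) = x
    exact Submodule.starProjection_eq_self_iff.mpr hx
  have hQorth : ∀ x ∈ V₃ᗮ, Q x = 0 := by
    intro x hx
    show (V₃.orthogonalProjectionOnto x : H) = 0
    rw [Submodule.orthogonalProjectionOnto_apply_of_mem_orthogonal hx]
    rfl
  have hcommQ : ∀ C : H →L[ℂ] H, (∀ x ∈ V₃, C x ∈ V₃) → (∀ x ∈ V₃ᗮ, C x ∈ V₃ᗮ) →
      Commute C Q := by
    intro C h1 h2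
    have hCQ : C * Q = Q * C := by
      ext x
      obtain ⟨y, hy, z, hz, rfl⟩ := V₃.exists_add_mem_mem_orthogonal x
      simp only [myInner_mul_apply, map_add, hQid y hy, hQorth z hz,
        hQid _ (h1 y hy), hQorth _ (h2 z hz), add_zero, map_zero]
    exact hCQ.symm.symm
  have hinv3o := hinvOrth _ hinv3
  have hAQ : Commute A Q :=
    hcommQ A (fun x hx => (hinv3 x hx).1) (fun x hx => (hinv3o x hx).1)
  have hA'Q : Commute (ContinuousLinearMap.adjoint A) Q :=
    hcommQ _ (fun x hx => (hinv3 x hx).2) (fun x hx => (hinv3o x hx).2)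
  have hinvR3 : ∀ x ∈ V₃, R x ∈ V₃ := myKer_inv hRT
  have horthR3 : ∀ x ∈ V₃ᗮ, R x ∈ V₃ᗮ :=
    myOrth_inv (fun y hy => by rw [hsaR.adjoint_eq]; exact hinvR3 y hy)
  have hRQ : Commute R Q := hcommQ R hinvR3 horthR3
  set R' : H →L[ℂ] H := Q * R * Q with hR'def
  have hsaR' : IsSelfAdjoint R' := by
    rw [hR'def, IsSelfAdjoint, star_mul, star_mul, hQsa.star_eq, hsaR.star_eq, mul_assoc]
  have hAR' : Commute A R' := (hAQ.mul_right hAR).mul_right hAQ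
  have hA'R' : Commute (ContinuousLinearMap.adjoint A) R' :=
    (hA'Q.mul_right hA'R).mul_right hA'Q
  have hR'eq : ∀ x ∈ V₃, R' x = R x := by
    intro x hx
    have h1 : R' x = Q (R (Q x)) := rfl
    rw [h1, hQid x hx, hQid _ (hinvR3 x hx)]
  have hkerR' : V₃ᗮ ≤ R'.ker := by
    intro x hx
    rw [LinearMap.mem_ker, ContinuousLinearMap.coe_coe]
    have h1 : R' x = Q (R (Q x)) := rfl
    rw [h1, hQorth x hx, map_zero, map_zero]
  have hsaR'p : IsSelfAdjoint (R'⁺) := IsSelfAdjoint.of_nonneg (CFC.posPart_nonneg R')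
  have hsaR'm : IsSelfAdjoint (R'⁻) := IsSelfAdjoint.of_nonneg (CFC.negPart_nonneg R')
  set V₄ : Submodule ℂ H := ((R'⁺).ker)ᗮ with hV₄
  set V₅ : Submodule ℂ H := ((R'⁻).ker)ᗮ with hV₅
  set V₆ : Submodule ℂ H := R'.ker ⊓ V₃ with hV₆
  haveI : CompleteSpace ((R'⁺).ker) :=
    (ContinuousLinearMap.isClosed_ker (R'⁺)).completeSpace_coe
  haveI : CompleteSpace ((R'⁻).ker) :=
    (ContinuousLinearMap.isClosed_ker (R'⁻)).completeSpace_coe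
  have hV₄V₃ : V₄ ≤ V₃ := by
    have h1 : V₃ᗮ ≤ (R'⁺).ker := le_trans hkerR' (myKer_le_posPart hsaR')
    exact (Submodule.orthogonal_le h1).trans (le_of_eq V₃.orthogonal_orthogonal)
  have hV₅V₃ : V₅ ≤ V₃ := by
    have h1 : V₃ᗮ ≤ (R'⁻).ker := le_trans hkerR' (myKer_le_negPart hsaR')
    exact (Submodule.orthogonal_le h1).trans (le_of_eq V₃.orthogonal_orthogonal)
  have hV₆V₃ : V₆ ≤ V₃ := inf_le_right
  have hV₄Rm : V₄ ≤ (R'⁻).ker :=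
    myOrthKer_le_ker hsaR'p (CFC.negPart_mul_posPart R')
  have hV₅Rp : V₅ ≤ (R'⁺).ker :=
    myOrthKer_le_ker hsaR'm (CFC.posPart_mul_negPart R')
  have hV₆Rp : V₆ ≤ (R'⁺).ker :=
    le_trans inf_le_left (myKer_le_posPart hsaR')
  have hV₆Rm : V₆ ≤ (R'⁻).ker :=
    le_trans inf_le_left (myKer_le_negPart hsaR')
  have h45 : ∀ x ∈ V₄, ∀ y ∈ V₅, ⟪x, y⟫_ℂ = 0 := by
    intro x hx y hy
    exact (Submodule.mem_orthogonal _ y).mp hy x (hV₄Rm hx)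
  have h46 : ∀ x ∈ V₄, ∀ y ∈ V₆, ⟪x, y⟫_ℂ = 0 := by
    intro x hx y hy
    rw [inner_eq_zero_symm]
    exact (Submodule.mem_orthogonal _ x).mp hx y (hV₆Rp hy)
  have h56 : ∀ x ∈ V₅, ∀ y ∈ V₆, ⟪x, y⟫_ℂ = 0 := by
    intro x hx y hy
    rw [inner_eq_zero_symm]
    exact (Submodule.mem_orthogonal _ x).mp hx y (hV₆Rm hy)
  have hsup₂ : V₄ ⊔ V₅ ⊔ V₆ = V₃ := by
    refine le_antisymm (sup_le (sup_le hV₄V₃ hV₅V₃) hV₆V₃) ?_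
    intro x hx
    obtain ⟨y, hy, z, hz, hxyz⟩ :=
      ((R'⁺).ker).exists_add_mem_mem_orthogonal x
    obtain ⟨u, hu, w, hw, hyuw⟩ :=
      ((R'⁻).ker).exists_add_mem_mem_orthogonal y
    have hwRp : w ∈ (R'⁺).ker := hV₅Rp hw
    have huRp : u ∈ (R'⁺).ker := by
      have h1 : u = y - w := by rw [hyuw]; abel
      rw [h1]
      exact Submodule.sub_mem _ hy hwRp
    have huker : u ∈ R'.ker := by
      rw [LinearMap.mem_ker, ContinuousLinearMap.coe_coe]
      rw [LinearMap.mem_ker, ContinuousLinearMap.coe_coe] at hu huRp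
      have h1 : R' u = R'⁺ u - R'⁻ u := by
        conv_lhs => rw [← CFC.posPart_sub_negPart R' hsaR']
        rw [ContinuousLinearMap.sub_apply]
      rw [h1, huRp, hu, sub_zero]
    have huV₃ : u ∈ V₃ := by
      have h1 : u = x - z - w := by rw [hxyz, hyuw]; abel
      rw [h1]
      exact Submodule.sub_mem _ (Submodule.sub_mem _ hx (hV₄V₃ hz)) (hV₅V₃ hw)
    have hx' : x = z + w + u := by rw [hxyz, hyuw]; abel
    rw [hx']
    exact Submodule.add_mem _
      (Submodule.add_mem _
        (Submodule.mem_sup_left (Submodule.mem_sup_left hz))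
        (Submodule.mem_sup_left (Submodule.mem_sup_right hw)))
      (Submodule.mem_sup_right (Submodule.mem_inf.mpr ⟨huker, huV₃⟩))
  have hinv4 : ∀ x ∈ V₄, A x ∈ V₄ ∧ ContinuousLinearMap.adjoint A x ∈ V₄ :=
    hinvOrth _ (hinvK (R'⁺) (myCommute_posPart hsaR' hAR') (myCommute_posPart hsaR' hA'R'))
  have hinv5 : ∀ x ∈ V₅, A x ∈ V₅ ∧ ContinuousLinearMap.adjoint A x ∈ V₅ :=
    hinvOrth _ (hinvK (R'⁻) (myCommute_negPart hsaR' hAR') (myCommute_negPart hsaR' hA'R'))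
  have hinv6 : ∀ x ∈ V₆, A x ∈ V₆ ∧ ContinuousLinearMap.adjoint A x ∈ V₆ := by
    intro x hx
    obtain ⟨hx1, hx2⟩ := Submodule.mem_inf.mp hx
    exact ⟨Submodule.mem_inf.mpr ⟨myKer_inv hAR' x hx1, (hinv3 x hx2).1⟩,
      Submodule.mem_inf.mpr ⟨myKer_inv hA'R' x hx1, (hinv3 x hx2).2⟩⟩
  have hrank4 : Module.rank ℂ V₄ < ℓ := by
    by_contra hcon
    push_neg at hcon
    obtain ⟨W, hWU, hWfin, c, hc0, hc⟩ :=
      myGood_subspace (S := R') hℓ (fun x hx hn => myPos_on_V1 hsaR' hx hn) hcon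
    have hmem : c ∈ { s : ℝ | ∃ W' : Submodule ℂ H, W' ≤ V₃ ∧ Module.finrank ℂ W' = ℓ ∧
        ∀ x ∈ W', ‖x‖ = 1 → s ≤ (⟪x, R x⟫_ℂ).re } := by
      refine ⟨W, hWU.trans hV₄V₃, hWfin, ?_⟩
      intro x hx hn
      rw [← hR'eq x (hV₄V₃ (hWU hx))]
      exact hc x hx hn
    have hle : c ≤ lambdaSub ℓ R V₃ := le_csSup (myBddAboveSub R V₃ hℓ) hmem
    linarith [hle.trans hlam]
  have hsign4 : ∀ x ∈ V₄, ‖x‖ = 1 →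
      (e * ⟪x, A x⟫_ℂ).im = 0 ∧ 0 < (e * ⟪x, A x⟫_ℂ).re := by
    intro x hx hn
    refine ⟨hsign3 x (hV₄V₃ hx) hn, ?_⟩
    rw [rekey x, ← hR'eq x (hV₄V₃ hx)]
    exact myPos_on_V1 hsaR' hx hn
  have hsign5 : ∀ x ∈ V₅, ‖x‖ = 1 →
      (e * ⟪x, A x⟫_ℂ).im = 0 ∧ (e * ⟪x, A x⟫_ℂ).re < 0 := by
    intro x hx hn
    refine ⟨hsign3 x (hV₅V₃ hx) hn, ?_⟩
    rw [rekey x, ← hR'eq x (hV₅V₃ hx)]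
    exact myNeg_on_V2 hsaR' hx hn
  have hzero6 : ∀ x ∈ V₆, A x = 0 := by
    intro x hx
    obtain ⟨hx1, hx2⟩ := Submodule.mem_inf.mp hx
    rw [LinearMap.mem_ker, ContinuousLinearMap.coe_coe] at hx1
    have hRx : R x = 0 := by rw [← hR'eq x hx2, hx1]
    have hTx : T x = 0 := by rw [hV₃, LinearMap.mem_ker] at hx2; exact hx2
    have hBx : (e • A) x = 0 := by
      rw [← hsum, ContinuousLinearMap.add_apply, ContinuousLinearMap.smul_apply,
        hRx, hTx, smul_zero, add_zero]
    rw [ContinuousLinearMap.smul_apply] at hBx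
    rcases smul_eq_zero.mp hBx with h | h
    · exact absurd h he0
    · exact h
  have hcl6 : IsClosed ((V₆ : Submodule ℂ H) : Set H) := by
    have h1 : ((V₆ : Submodule ℂ H) : Set H) =
        ((R'.ker : Submodule ℂ H) : Set H) ∩ ((V₃ : Submodule ℂ H) : Set H) := rfl
    rw [h1]
    exact (ContinuousLinearMap.isClosed_ker R').inter (ContinuousLinearMap.isClosed_ker T)
  exact ⟨V₄, V₅, V₆, hV₄V₃, hV₅V₃, hV₆V₃, Submodule.isClosed_orthogonal _,
    Submodule.isClosed_orthogonal _, hcl6, h45, h46, h56, hsup₂, hinv4, hinv5, hinv6,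
    hrank4, hsign4, hsign5, hzero6⟩
end
end

section
/- Let ℋ be a complex Hilbert space, let A ∈ B(ℋ) be self-adjoint, let k be a positive integer with k ≤ dim ℋ, and let λ ∈ ℝ. Then λ ∉ Λ_k(A) if and only if A admits an orthogonal decomposition A = Ã₁ ⊕ Ã₂ such that dim Ã₁ < k, W(Ã₁) ⊆ L, and W(Ã₂) ⊆ ℝ \ L, where L = [λ, ∞) or L = (−∞, λ]. -/
set_option synthInstance.maxHeartbeats 1000000
set_option maxHeartbeats 2000000
set_option linter.unusedVariables false
set_option linter.unusedSectionVars false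


noncomputable section

open scoped InnerProductSpace
open Complex

variable {H : Type*} [NormedAddCommGroup H] [InnerProductSpace ℂ H] [CompleteSpace H]

private lemma sa_symm {g : H →L[ℂ] H} (hg : IsSelfAdjoint g) (x y : H) :
    ⟪g x, y⟫_ℂ = ⟪x, g y⟫_ℂ := hg.isSymmetric x y

private lemma unit_smul {x : H} (hx : x ≠ 0) :
    ‖((‖x‖⁻¹ : ℝ) : ℂ) • x‖ = 1 := by
  rw [norm_smul]
  have h0 : ‖x‖ ≠ 0 := norm_ne_zero_iff.mpr hx
  simp [abs_of_nonneg, inv_nonneg, norm_nonneg, inv_mul_cancel₀ h0]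

private lemma exists_unit_perp (S F : Submodule ℂ H) [FiniteDimensional ℂ F]
    (h : Module.rank ℂ F < Module.rank ℂ S) :
    ∃ x : H, x ∈ S ∧ ‖x‖ = 1 ∧ ∀ y ∈ F, ⟪y, x⟫_ℂ = 0 := by
  haveI : CompleteSpace F := FiniteDimensional.complete ℂ F
  set π : ↥S →ₗ[ℂ] ↥F := F.orthogonalProjectionOnto.toLinearMap ∘ₗ S.subtype with hπ
  have hni : ¬ Function.Injective π := fun hinj =>
    absurd (LinearMap.rank_le_of_injective π hinj) (not_le.mpr h)
  rw [Function.not_injective_iff] at hni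
  obtain ⟨a, b, hab, hne⟩ := hni
  have hx : π (a - b) = 0 := by rw [map_sub, hab, sub_self]
  have hx0 : ((a - b : ↥S) : H) ≠ 0 := by
    intro hc
    exact sub_ne_zero.mpr hne (by exact_mod_cast Subtype.coe_injective (hc.trans rfl) )
  have hxperp : ((a - b : ↥S) : H) ∈ Fᗮ := by
    rw [← Submodule.orthogonalProjectionOnto_eq_zero_iff]
    exact hx
  refine ⟨((‖((a-b:↥S):H)‖⁻¹ : ℝ) : ℂ) • ((a-b:↥S):H), S.smul_mem _ (a-b).2,
    unit_smul hx0, ?_⟩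
  intro y hy
  have := Fᗮ.smul_mem ((‖((a-b:↥S):H)‖⁻¹ : ℝ) : ℂ) hxperp
  exact (Submodule.mem_orthogonal _ _).mp this y hy

private lemma orthonormal_coe {S : Submodule ℂ H} {ι : Type*} {v : ι → ↥S}
    (hv : Orthonormal ℂ v) : Orthonormal ℂ (fun i => (v i : H)) := by
  classical
  rw [orthonormal_iff_ite] at hv ⊢
  intro i j
  rw [← Submodule.coe_inner]
  exact hv i j

private lemma exists_good_family (g : H →L[ℂ] H) (hg : IsSelfAdjoint g)
    (S : Submodule ℂ H) (hinv : ∀ x ∈ S, g x ∈ S) (m : ℕ)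
    (hm : (m : Cardinal) ≤ Module.rank ℂ S) :
    ∃ u : Fin m → H, (∀ i, u i ∈ S) ∧ Orthonormal ℂ u ∧
      ∀ i j, i ≠ j → ⟪u i, g (u j)⟫_ℂ = 0 := by
  by_cases hfin : FiniteDimensional ℂ ↥S
  · -- diagonalize the restriction
    have hinv' : ∀ x ∈ S, (g : H →ₗ[ℂ] H) x ∈ S := hinv
    set T : ↥S →ₗ[ℂ] ↥S := (g : H →ₗ[ℂ] H).restrict hinv' with hT
    have hTsym : T.IsSymmetric := by
      intro x y
      rw [Submodule.coe_inner, Submodule.coe_inner]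
      have hx : (T x : H) = g x := rfl
      have hy : (T y : H) = g y := rfl
      rw [hx, hy]
      exact sa_symm hg _ _
    have hmn : m ≤ Module.finrank ℂ ↥S := by
      have := Module.finrank_eq_rank ℂ ↥S
      rw [← this] at hm
      exact_mod_cast hm
    set b := hTsym.eigenvectorBasis rfl with hb
    refine ⟨fun i => (b (Fin.castLE hmn i) : H), fun i => (b _).2, ?_, ?_⟩
    · exact (orthonormal_coe b.orthonormal).comp _ (Fin.castLE_injective hmn)
    · intro i j hij
      have key : g ((b (Fin.castLE hmn j) : H))
          = ((hTsym.eigenvalues rfl (Fin.castLE hmn j) : ℂ)) • (b (Fin.castLE hmn j) : H) := by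
        have h1 : ((T (b (Fin.castLE hmn j)) : ↥S) : H) = g ((b (Fin.castLE hmn j)) : H) := rfl
        rw [← h1, hTsym.apply_eigenvectorBasis, Submodule.coe_smul, hb]
        rfl
      rw [key, inner_smul_right]
      have ho := orthonormal_iff_ite.mp
        ((orthonormal_coe b.orthonormal).comp _ (Fin.castLE_injective hmn)) i j
      simp only [Function.comp_apply] at ho
      simp only [ho, hij, if_false, mul_zero]
  · have hS : (Cardinal.aleph0) ≤ Module.rank ℂ ↥S := by
      by_contra hlt
      exact hfin (Module.rank_lt_aleph0_iff.mp (not_le.mp hlt))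
    clear hm
    induction m with
    | zero =>
      refine ⟨Fin.elim0, fun i => i.elim0, ?_, fun i => i.elim0⟩
      rw [orthonormal_iff_ite]; exact fun i => i.elim0
    | succ n ih =>
      obtain ⟨u, huS, huo, hug⟩ := ih
      set F := Submodule.span ℂ (Set.range u ∪ Set.range (g ∘ u)) with hF
      haveI : FiniteDimensional ℂ ↥F :=
        FiniteDimensional.span_of_finite ℂ ((Set.finite_range u).union (Set.finite_range (g ∘ u)))
      have hrF : Module.rank ℂ ↥F < Module.rank ℂ ↥S :=
        lt_of_lt_of_le (Module.rank_lt_aleph0 ℂ ↥F) hS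
      obtain ⟨x, hxS, hx1, hxperp⟩ := exists_unit_perp S F hrF
      have hpu : ∀ i, ⟪u i, x⟫_ℂ = 0 := fun i =>
        hxperp _ (Submodule.subset_span (Or.inl ⟨i, rfl⟩))
      have hpgu : ∀ i, ⟪g (u i), x⟫_ℂ = 0 := fun i =>
        hxperp _ (Submodule.subset_span (Or.inr ⟨i, rfl⟩))
      refine ⟨Fin.snoc u x, ?_, ?_, ?_⟩
      · intro i
        refine Fin.lastCases ?_ ?_ i
        · rw [Fin.snoc_last]; exact hxS
        · intro j; rw [Fin.snoc_castSucc]; exact huS j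
      · rw [orthonormal_iff_ite]
        have huo' := orthonormal_iff_ite.mp huo
        intro i j
        refine Fin.lastCases ?_ ?_ i <;> [skip; intro i'] <;> refine Fin.lastCases ?_ ?_ j <;>
          try intro j'
        · simp [Fin.snoc_last, inner_self_eq_norm_sq_to_K, hx1]
        · simp only [Fin.snoc_last, Fin.snoc_castSucc]
          rw [inner_eq_zero_symm.mpr (hpu j')]
          simp [(Fin.castSucc_lt_last j').ne']
        · simp only [Fin.snoc_last, Fin.snoc_castSucc]
          rw [hpu i']
          simp [(Fin.castSucc_lt_last i').ne]
        · simp only [Fin.snoc_castSucc, huo' i' j', Fin.castSucc_inj]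
      · intro i j
        refine Fin.lastCases ?_ ?_ i
        · refine Fin.lastCases ?_ ?_ j
          · intro hij; exact absurd rfl hij
          · intro j' _
            simp only [Fin.snoc_last, Fin.snoc_castSucc]
            exact inner_eq_zero_symm.mpr (hxperp _ (Submodule.subset_span (Or.inr ⟨j', rfl⟩)))
        · intro i'
          refine Fin.lastCases ?_ ?_ j
          · intro _
            simp only [Fin.snoc_last, Fin.snoc_castSucc]
            rw [← sa_symm hg]
            exact hpgu i'
          · intro j' hij
            simp only [Fin.snoc_castSucc]
            exact hug i' j' (by simpa using hij)

private lemma mem_rankKRange_of_family (A : H →L[ℂ] H) (k : ℕ) (lam : ℂ)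
    (e : Fin k → H) (he : Orthonormal ℂ e)
    (hAe : ∀ i j, ⟪e i, A (e j)⟫_ℂ = if i = j then lam else 0) :
    lam ∈ rankKRange k A := by
  classical
  set P : H →L[ℂ] H := ∑ i, (innerSL ℂ (e i)).smulRight (e i) with hPdef
  have hPapp : ∀ x, P x = ∑ i, ⟪e i, x⟫_ℂ • e i := by
    intro x
    simp [hPdef, ContinuousLinearMap.sum_apply]
  have he' := orthonormal_iff_ite.mp he
  have hPe : ∀ j, P (e j) = e j := by
    intro j
    rw [hPapp]
    have : ∀ i, ⟪e i, e j⟫_ℂ • e i = if i = j then e j else 0 := by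
      intro i; rw [he']; split <;> simp_all
    simp only [this]
    simp
  have hsym : ∀ x y, ⟪P x, y⟫_ℂ = ⟪x, P y⟫_ℂ := by
    intro x y
    rw [hPapp, hPapp, sum_inner, inner_sum]
    congr 1; funext i
    rw [inner_smul_left, inner_smul_right, ← inner_conj_symm x (e i)]
    ring
  have hsa : IsSelfAdjoint P := by
    rw [ContinuousLinearMap.isSelfAdjoint_iff']
    ext x
    refine ext_inner_right ℂ fun y => ?_
    rw [ContinuousLinearMap.adjoint_inner_left]
    exact (hsym x y).symm
  have hidem : P ∘L P = P := by
    ext x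
    simp only [ContinuousLinearMap.comp_apply]
    conv_lhs => rw [hPapp x]
    rw [map_sum]
    simp only [map_smul, hPe]
    rw [← hPapp]
  have hrank : opRank P = k := by
    have hr : LinearMap.range (P : H →ₗ[ℂ] H) = Submodule.span ℂ (Set.range e) := by
      apply le_antisymm
      · rintro y ⟨x, rfl⟩
        rw [show ((P : H →ₗ[ℂ] H) x) = P x from rfl, hPapp]
        exact Submodule.sum_mem _ fun i _ =>
          Submodule.smul_mem _ _ (Submodule.subset_span ⟨i, rfl⟩)
      · rw [Submodule.span_le]
        rintro y ⟨j, rfl⟩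
        exact ⟨e j, hPe j⟩
    rw [opRank, hr, rank_span he.linearIndependent]
    have h1 := Cardinal.mk_range_eq_of_injective he.linearIndependent.injective
    rw [Cardinal.mk_fin] at h1
    simpa using h1
  have hPAP : P ∘L A ∘L P = lam • P := by
    ext x
    simp only [ContinuousLinearMap.comp_apply, ContinuousLinearMap.smul_apply]
    have hPAe : ∀ j, P (A (e j)) = lam • e j := by
      intro j
      rw [hPapp]
      have : ∀ i, ⟪e i, A (e j)⟫_ℂ • e i = if i = j then lam • e j else 0 := by
        intro i; rw [hAe]; split <;> simp_all
      simp only [this]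
      simp
    have hAPx : A (P x) = ∑ i, ⟪e i, x⟫_ℂ • A (e i) := by
      rw [hPapp x, map_sum]; simp only [map_smul]
    rw [hAPx, map_sum]
    simp only [map_smul, hPAe]
    rw [hPapp x, Finset.smul_sum]
    congr 1; funext i
    rw [smul_comm]
  exact ⟨P, ⟨hsa, hidem⟩, hrank, hPAP⟩

/-- If `x ∈ ker b` is orthogonal to `K = ker a ⊓ ker b`, then `x` is orthogonal
to all of `ker a`.  Here `a`, `b` are self-adjoint with `b ∘ a = 0`. -/
private lemma perp_of_ranges (a b : H →L[ℂ] H) (ha : IsSelfAdjoint a)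
    (hab : ∀ x, b (a x) = 0) (x : H) (hxb : x ∈ LinearMap.ker (b : H →ₗ[ℂ] H))
    (hxK : x ∈ ((LinearMap.ker (a : H →ₗ[ℂ] H) ⊓ LinearMap.ker (b : H →ₗ[ℂ] H) : Submodule ℂ H) : Submodule ℂ H)ᗮ)
    (y : H) (hy : y ∈ LinearMap.ker (a : H →ₗ[ℂ] H)) : ⟪x, y⟫_ℂ = 0 := by
  set K : Submodule ℂ H := LinearMap.ker (a : H →ₗ[ℂ] H) ⊓ LinearMap.ker (b : H →ₗ[ℂ] H) with hK
  set C : Submodule ℂ H := (LinearMap.range (a : H →ₗ[ℂ] H)).topologicalClosure with hC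
  have hCclosed : IsClosed (C : Set H) := Submodule.isClosed_topologicalClosure _
  haveI : CompleteSpace C := hCclosed.completeSpace_coe
  have hrange_kerb : LinearMap.range (a : H →ₗ[ℂ] H) ≤ LinearMap.ker (b : H →ₗ[ℂ] H) := by
    rintro _ ⟨z, rfl⟩; exact hab z
  have hC_kerb : C ≤ LinearMap.ker (b : H →ₗ[ℂ] H) :=
    Submodule.topologicalClosure_minimal _ hrange_kerb (ContinuousLinearMap.isClosed_ker b)
  have hrange_Kperp : LinearMap.range (a : H →ₗ[ℂ] H) ≤ Kᗮ := by
    rintro _ ⟨z, rfl⟩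
    rw [Submodule.mem_orthogonal]
    intro w hw
    show ⟪w, a z⟫_ℂ = 0
    rw [← sa_symm ha]
    have : a w = 0 := hw.1
    rw [this, inner_zero_left]
  have hC_Kperp : C ≤ Kᗮ :=
    Submodule.topologicalClosure_minimal _ hrange_Kperp (Submodule.isClosed_orthogonal K)
  have hrange_kerap : LinearMap.range (a : H →ₗ[ℂ] H) ≤ (LinearMap.ker (a : H →ₗ[ℂ] H))ᗮ := by
    rintro _ ⟨z, rfl⟩
    rw [Submodule.mem_orthogonal]
    intro w hw
    show ⟪w, a z⟫_ℂ = 0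
    rw [← sa_symm ha, show a w = 0 from hw, inner_zero_left]
  have hC_kerap : C ≤ (LinearMap.ker (a : H →ₗ[ℂ] H))ᗮ :=
    Submodule.topologicalClosure_minimal _ hrange_kerap
      (Submodule.isClosed_orthogonal _)
  -- decompose x
  set c : H := (C.orthogonalProjectionOnto x : H) with hc
  have hcC : c ∈ C := (C.orthogonalProjectionOnto x).2
  have hrperp : x - c ∈ Cᗮ := Submodule.sub_starProjection_mem_orthogonal (K := C) x
  have hr_kera : x - c ∈ LinearMap.ker (a : H →ₗ[ℂ] H) := by
    have hperp_range : x - c ∈ (LinearMap.range (a : H →ₗ[ℂ] H))ᗮ :=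
      Submodule.orthogonal_le (Submodule.le_topologicalClosure _) hrperp
    have : ∀ z : H, ⟪z, a (x - c)⟫_ℂ = 0 := by
      intro z
      rw [← sa_symm ha]
      exact (Submodule.mem_orthogonal _ _).mp hperp_range _ ⟨z, rfl⟩
    have h0 : a (x - c) = 0 := ext_inner_left ℂ (fun v => by rw [this v, inner_zero_right])
    exact h0
  have hr_kerb : x - c ∈ LinearMap.ker (b : H →ₗ[ℂ] H) := by
    have : b (x - c) = b x - b c := map_sub _ _ _
    have hbx : b x = 0 := hxb
    have hbc : b c = 0 := hC_kerb hcC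
    simp [LinearMap.mem_ker, this, hbx, hbc]
  have hr_K : x - c ∈ K := ⟨hr_kera, hr_kerb⟩
  have hr_Kperp : x - c ∈ Kᗮ := Submodule.sub_mem _ hxK (hC_Kperp hcC)
  have hr0 : x - c = 0 := by
    have := (Submodule.mem_orthogonal _ _).mp hr_Kperp _ hr_K
    rwa [inner_self_eq_zero] at this
  have hxC : x ∈ C := by
    have : x = c := by rw [← sub_eq_zero]; exact hr0
    rw [this]; exact hcC
  have := (Submodule.mem_orthogonal _ _).mp (hC_kerap hxC) y hy
  rw [← inner_eq_zero_symm] at this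
  exact this

/-- rank bound for the part of `M` orthogonal to a finite-dimensional `K`. -/
private lemma rank_compl_ge (M K : Submodule ℂ H) [FiniteDimensional ℂ K]
    {k d : ℕ} (hd : Module.finrank ℂ K = d)
    (hk : (k : Cardinal) ≤ Module.rank ℂ M) :
    ((k - d : ℕ) : Cardinal) ≤ Module.rank ℂ (M ⊓ Kᗮ : Submodule ℂ H) := by
  haveI : CompleteSpace K := FiniteDimensional.complete ℂ K
  set π : ↥M →ₗ[ℂ] ↥K := K.orthogonalProjectionOnto.toLinearMap ∘ₗ M.subtype with hπ
  have hrn := LinearMap.rank_range_add_rank_ker π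
  have hrange_le : Module.rank ℂ (LinearMap.range π) ≤ (d : Cardinal) := by
    have := Submodule.rank_le (LinearMap.range π)
    rwa [← Module.finrank_eq_rank ℂ ↥K, hd] at this
  have hker_le : Module.rank ℂ (LinearMap.ker π) ≤ Module.rank ℂ (M ⊓ Kᗮ : Submodule ℂ H) := by
    set φ : ↥(LinearMap.ker π) →ₗ[ℂ] ↥(M ⊓ Kᗮ : Submodule ℂ H) :=
      LinearMap.codRestrict _ (M.subtype ∘ₗ (LinearMap.ker π).subtype) (by
        rintro ⟨⟨x, hxM⟩, hxker⟩
        refine ⟨hxM, ?_⟩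
        have : K.orthogonalProjectionOnto x = 0 := by
          have := hxker
          rwa [LinearMap.mem_ker] at this
        exact Submodule.orthogonalProjectionOnto_eq_zero_iff.mp this) with hφ
    have hinj : Function.Injective φ := by
      rw [← LinearMap.ker_eq_bot, hφ, LinearMap.ker_codRestrict, LinearMap.ker_eq_bot]
      exact (Submodule.injective_subtype M).comp (Submodule.injective_subtype _)
    exact LinearMap.rank_le_of_injective φ hinj
  by_contra hcon
  rw [not_le] at hcon
  have hfin : Module.rank ℂ (LinearMap.ker π) < Cardinal.aleph0 :=
    lt_trans (lt_of_le_of_lt hker_le hcon) (Cardinal.nat_lt_aleph0 _)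
  obtain ⟨r, hr⟩ := Cardinal.lt_aleph0.mp hfin
  have hrlt : (r : Cardinal) < ((k - d : ℕ) : Cardinal) := by
    rw [← hr]; exact lt_of_le_of_lt hker_le hcon
  have hrlt' : r < k - d := by exact_mod_cast hrlt
  have hsum : (k : Cardinal) ≤ ((d + r : ℕ) : Cardinal) := by
    calc (k : Cardinal) ≤ Module.rank ℂ M := hk
    _ = Module.rank ℂ (LinearMap.range π) + Module.rank ℂ (LinearMap.ker π) := hrn.symm
    _ ≤ (d : Cardinal) + (r : Cardinal) := by
        rw [← hr]; exact add_le_add hrange_le le_rfl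
    _ = ((d + r : ℕ) : Cardinal) := by push_cast; ring
  have : k ≤ d + r := by exact_mod_cast hsum
  omega

/-- combining two mutually orthogonal, `g`-orthogonal families. -/
private lemma combine_families (g : H →L[ℂ] H) {p q : ℕ} (w : Fin p → H) (z : Fin q → H)
    (hw : Orthonormal ℂ w) (hz : Orthonormal ℂ z)
    (hwz : ∀ i j, ⟪w i, z j⟫_ℂ = 0)
    (hgww : ∀ i j, ⟪w i, g (w j)⟫_ℂ = 0) (hgzz : ∀ i j, ⟪z i, g (z j)⟫_ℂ = 0)
    (hgwz : ∀ i j, ⟪w i, g (z j)⟫_ℂ = 0) (hgzw : ∀ i j, ⟪z i, g (w j)⟫_ℂ = 0) :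
    Orthonormal ℂ (Fin.append w z) ∧
      ∀ i j, ⟪Fin.append w z i, g (Fin.append w z j)⟫_ℂ = 0 := by
  have hw' := orthonormal_iff_ite.mp hw
  have hz' := orthonormal_iff_ite.mp hz
  constructor
  · rw [orthonormal_iff_ite]
    intro i j
    refine Fin.addCases (fun i' => ?_) (fun i' => ?_) i <;>
      refine Fin.addCases (fun j' => ?_) (fun j' => ?_) j <;>
      simp only [Fin.append_left, Fin.append_right]
    · rw [hw' i' j']
      congr 1
      simp [Fin.ext_iff]
    · have hne : (Fin.castAdd q i' : Fin (p+q)) ≠ Fin.natAdd p j' := by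
        intro hcontra
        have h' := congrArg Fin.val hcontra
        simp only [Fin.coe_castAdd, Fin.coe_natAdd] at h'
        omega
      rw [if_neg hne, hwz i' j']
    · have hne : (Fin.natAdd p i' : Fin (p+q)) ≠ Fin.castAdd q j' := by
        intro hcontra
        have h' := congrArg Fin.val hcontra
        simp only [Fin.coe_castAdd, Fin.coe_natAdd] at h'
        omega
      rw [if_neg hne, inner_eq_zero_symm.mpr (hwz j' i')]
    · rw [hz' i' j']
      congr 1
      simp [Fin.ext_iff]
  · intro i j
    refine Fin.addCases (fun i' => ?_) (fun i' => ?_) i <;>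
      refine Fin.addCases (fun j' => ?_) (fun j' => ?_) j <;>
      simp only [Fin.append_left, Fin.append_right]
    · exact hgww i' j'
    · exact hgwz i' j'
    · exact hgzw i' j'
    · exact hgzz i' j'

private lemma key_construction (A g gp gn sp sn : H →L[ℂ] H) (lam : ℝ)
    (hA_eq : ∀ x : H, A x = g x + ((lam : ℂ)) • x)
    (hg : IsSelfAdjoint g) (hgp : IsSelfAdjoint gp) (hgn : IsSelfAdjoint gn)
    (hsp : IsSelfAdjoint sp) (hsn : IsSelfAdjoint sn)
    (hdiff : ∀ x, g x = gp x - gn x)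
    (hpn : ∀ x, gp (gn x) = 0) (hnp : ∀ x, gn (gp x) = 0)
    (hsp2 : ∀ x, sp (sp x) = gp x) (hsn2 : ∀ x, sn (sn x) = gn x)
    (hcp : ∀ x, gp (g x) = g (gp x)) (hcn : ∀ x, gn (g x) = g (gn x))
    (k : ℕ)
    (hkp : (k : Cardinal) ≤ Module.rank ℂ (LinearMap.ker (gp : H →ₗ[ℂ] H)))
    (hkn : (k : Cardinal) ≤ Module.rank ℂ (LinearMap.ker (gn : H →ₗ[ℂ] H))) :
    ((lam : ℂ)) ∈ rankKRange k A := by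
  classical
  set K : Submodule ℂ H := LinearMap.ker (gp : H →ₗ[ℂ] H) ⊓ LinearMap.ker (gn : H →ₗ[ℂ] H) with hK
  have hgK : ∀ x ∈ K, g x = 0 := by
    intro x hx
    rw [hdiff, show gp x = 0 from hx.1, show gn x = 0 from hx.2, sub_zero]
  -- convert a `g`-null family into the conclusion
  have finish : ∀ e : Fin k → H, Orthonormal ℂ e →
      (∀ i j, ⟪e i, g (e j)⟫_ℂ = 0) → ((lam : ℂ)) ∈ rankKRange k A := by
    intro e he hge
    apply mem_rankKRange_of_family A k _ e he
    intro i j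
    rw [hA_eq, inner_add_right, inner_smul_right, hge i j,
      orthonormal_iff_ite.mp he i j]
    split <;> simp
  by_cases hcase : (k : Cardinal) ≤ Module.rank ℂ K
  · obtain ⟨e, heK, heo, heg⟩ := exists_good_family g hg K
      (fun x hx => by rw [hgK x hx]; exact K.zero_mem) k hcase
    refine finish e heo fun i j => ?_
    rw [hgK _ (heK j), inner_zero_right]
  · -- K is finite-dimensional of dimension d < k
    have hKfin : Module.rank ℂ K < Cardinal.aleph0 :=
      lt_trans (not_le.mp hcase) (Cardinal.nat_lt_aleph0 _)
    haveI hKfd : FiniteDimensional ℂ K := Module.rank_lt_aleph0_iff.mp hKfin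
    set d : ℕ := Module.finrank ℂ K with hd
    have hdk : d < k := by
      have h1 : ((d : ℕ) : Cardinal) = Module.rank ℂ K := Module.finrank_eq_rank ℂ K
      have := not_le.mp hcase
      rw [← h1] at this
      exact_mod_cast this
    set m : ℕ := k - d with hm
    have hdm : d + m = k := by omega
    -- the positive part subspace
    set Pp : Submodule ℂ H := LinearMap.ker (gn : H →ₗ[ℂ] H) ⊓ Kᗮ with hPp
    set Pm : Submodule ℂ H := LinearMap.ker (gp : H →ₗ[ℂ] H) ⊓ Kᗮ with hPm
    have hrp : (m : Cardinal) ≤ Module.rank ℂ Pp := rank_compl_ge _ K rfl hkn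
    have hrm : (m : Cardinal) ≤ Module.rank ℂ Pm := rank_compl_ge _ K rfl hkp
    have hKperp_g : ∀ x ∈ Kᗮ, g x ∈ Kᗮ := by
      intro x hx
      rw [Submodule.mem_orthogonal]
      intro w hw
      rw [← sa_symm hg, hgK w hw, inner_zero_left]
    have hPp_inv : ∀ x ∈ Pp, g x ∈ Pp := by
      intro x hx
      obtain ⟨hx1, hx2⟩ := Submodule.mem_inf.mp hx
      refine Submodule.mem_inf.mpr ⟨?_, hKperp_g x hx2⟩
      rw [LinearMap.mem_ker, ContinuousLinearMap.coe_coe, hcn, show gn x = 0 from hx1, map_zero]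
    have hPm_inv : ∀ x ∈ Pm, g x ∈ Pm := by
      intro x hx
      obtain ⟨hx1, hx2⟩ := Submodule.mem_inf.mp hx
      refine Submodule.mem_inf.mpr ⟨?_, hKperp_g x hx2⟩
      rw [LinearMap.mem_ker, ContinuousLinearMap.coe_coe, hcp, show gp x = 0 from hx1, map_zero]
    obtain ⟨u, huP, huo, hug⟩ := exists_good_family g hg Pp hPp_inv m hrp
    obtain ⟨v, hvP, hvo, hvg⟩ := exists_good_family g hg Pm hPm_inv m hrm
    have huP1 : ∀ i, gn (u i) = 0 := fun i => (Submodule.mem_inf.mp (huP i)).1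
    have huP2 : ∀ i, u i ∈ Kᗮ := fun i => (Submodule.mem_inf.mp (huP i)).2
    have hvP1 : ∀ i, gp (v i) = 0 := fun i => (Submodule.mem_inf.mp (hvP i)).1
    have hvP2 : ∀ i, v i ∈ Kᗮ := fun i => (Submodule.mem_inf.mp (hvP i)).2
    -- diagonal values
    set a : Fin m → ℝ := fun i => ‖sp (u i)‖^2 with ha
    set c : Fin m → ℝ := fun i => ‖sn (v i)‖^2 with hc
    have hga : ∀ i, ⟪u i, g (u i)⟫_ℂ = ((a i : ℝ) : ℂ) := by
      intro i
      rw [hdiff, inner_sub_right, huP1 i, inner_zero_right,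
        sub_zero, ← hsp2, ← sa_symm hsp, inner_self_eq_norm_sq_to_K, ha]
      norm_cast
    have hgc : ∀ i, ⟪v i, g (v i)⟫_ℂ = ((-(c i) : ℝ) : ℂ) := by
      intro i
      rw [hdiff, inner_sub_right, hvP1 i, inner_zero_right,
        ← hsn2, ← sa_symm hsn, inner_self_eq_norm_sq_to_K, hc]
      norm_cast
      simp
    have hmemK_ne : ∀ x : H, x ∈ K → x ∈ Kᗮ → x = 0 := by
      intro x h1 h2
      have := (Submodule.mem_orthogonal _ _).mp h2 x h1
      rwa [inner_self_eq_zero] at this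
    have hapos : ∀ i, 0 < a i := by
      intro i
      rcases eq_or_ne (sp (u i)) 0 with h | h
      · exfalso
        have hgpu : gp (u i) = 0 := by rw [← hsp2, h, map_zero]
        have hKi : u i ∈ K := Submodule.mem_inf.mpr ⟨hgpu, huP1 i⟩
        have h0 : u i = 0 := hmemK_ne _ hKi (huP2 i)
        have := huo.1 i
        rw [h0, norm_zero] at this; norm_num at this
      · have : ‖sp (u i)‖ > 0 := norm_pos_iff.mpr h
        rw [ha]; positivity
    have hcpos : ∀ i, 0 < c i := by
      intro i
      rcases eq_or_ne (sn (v i)) 0 with h | h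
      · exfalso
        have hgnv : gn (v i) = 0 := by rw [← hsn2, h, map_zero]
        have hKi : v i ∈ K := Submodule.mem_inf.mpr ⟨hvP1 i, hgnv⟩
        have h0 : v i = 0 := hmemK_ne _ hKi (hvP2 i)
        have := hvo.1 i
        rw [h0, norm_zero] at this; norm_num at this
      · have : ‖sn (v i)‖ > 0 := norm_pos_iff.mpr h
        rw [hc]; positivity
    -- cross orthogonality
    have hu_perp : ∀ i, ∀ y ∈ LinearMap.ker (gp : H →ₗ[ℂ] H), ⟪u i, y⟫_ℂ = 0 := by
      intro i y hy
      refine perp_of_ranges gp gn hgp hnp (u i) (huP1 i) ?_ y hy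
      rw [← hK]; exact huP2 i
    have hv_perp : ∀ i, ∀ y ∈ LinearMap.ker (gn : H →ₗ[ℂ] H), ⟪v i, y⟫_ℂ = 0 := by
      intro i y hy
      refine perp_of_ranges gn gp hgn hpn (v i) (hvP1 i) ?_ y hy
      rw [inf_comm, ← hK]
      exact hvP2 i
    have huv : ∀ i j, ⟪u i, v j⟫_ℂ = 0 := fun i j => hu_perp i _ (hvP1 j)
    have hvu : ∀ i j, ⟪v i, u j⟫_ℂ = 0 := fun i j => inner_eq_zero_symm.mpr (huv j i)
    have hugv : ∀ i j, ⟪u i, g (v j)⟫_ℂ = 0 := by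
      intro i j
      have hgv : g (v j) = -(gn (v j)) := by
        rw [hdiff, hvP1 j, zero_sub]
      rw [hgv, inner_neg_right, hu_perp i _ (show gp (gn (v j)) = 0 from hpn (v j)),
        neg_zero]
    have hvgu : ∀ i j, ⟪v i, g (u j)⟫_ℂ = 0 := by
      intro i j
      have hgu : g (u j) = gp (u j) := by
        rw [hdiff, huP1 j, sub_zero]
      rw [hgu, hv_perp i _ (show gn (gp (u j)) = 0 from hnp (u j))]
    -- the z family
    have hac : ∀ i, 0 < a i + c i := fun i => add_pos (hapos i) (hcpos i)
    set al : Fin m → ℝ := fun i => Real.sqrt (c i / (a i + c i)) with hal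
    set be : Fin m → ℝ := fun i => Real.sqrt (a i / (a i + c i)) with hbe
    have hal2 : ∀ i, al i * al i = c i / (a i + c i) := fun i =>
      Real.mul_self_sqrt (by positivity)
    have hbe2 : ∀ i, be i * be i = a i / (a i + c i) := fun i =>
      Real.mul_self_sqrt (by positivity)
    set z : Fin m → H := fun i => ((al i : ℝ) : ℂ) • u i + ((be i : ℝ) : ℂ) • v i with hzdef
    have huo' := orthonormal_iff_ite.mp huo
    have hvo' := orthonormal_iff_ite.mp hvo
    have hzz : ∀ i j, ⟪z i, z j⟫_ℂ = if i = j then 1 else 0 := by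
      intro i j
      have expand : ⟪z i, z j⟫_ℂ = (al i : ℂ) * (al j) * ⟪u i, u j⟫_ℂ
          + (al i : ℂ) * (be j) * ⟪u i, v j⟫_ℂ
          + (be i : ℂ) * (al j) * ⟪v i, u j⟫_ℂ
          + (be i : ℂ) * (be j) * ⟪v i, v j⟫_ℂ := by
        simp only [hzdef, inner_add_left, inner_add_right, inner_smul_left, inner_smul_right,
          Complex.conj_ofReal]
        ring
      rw [expand, huo' i j, hvo' i j, huv i j, hvu i j]
      rcases eq_or_ne i j with rfl | hij
      · simp only [eq_self_iff_true, if_true, if_pos, mul_one, mul_zero, add_zero, zero_add]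
        have h1 : al i * al i + be i * be i = 1 := by
          have hne : a i + c i ≠ 0 := (hac i).ne'
          rw [hal2 i, hbe2 i]
          field_simp
          ring
        have h2 := congrArg (fun t : ℝ => (t : ℂ)) h1
        push_cast at h2 ⊢
        linear_combination h2
      · simp [hij]
    have hzort : Orthonormal ℂ z := orthonormal_iff_ite.mpr hzz
    have hzgz : ∀ i j, ⟪z i, g (z j)⟫_ℂ = 0 := by
      intro i j
      have hgz : g (z j) = ((al j : ℝ) : ℂ) • g (u j) + ((be j : ℝ) : ℂ) • g (v j) := by
        rw [hzdef]
        simp [map_add, map_smul]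
      have expand : ⟪z i, g (z j)⟫_ℂ = (al i : ℂ) * (al j) * ⟪u i, g (u j)⟫_ℂ
          + (al i : ℂ) * (be j) * ⟪u i, g (v j)⟫_ℂ
          + (be i : ℂ) * (al j) * ⟪v i, g (u j)⟫_ℂ
          + (be i : ℂ) * (be j) * ⟪v i, g (v j)⟫_ℂ := by
        rw [hgz]
        simp only [hzdef, inner_add_left, inner_add_right, inner_smul_left, inner_smul_right,
          Complex.conj_ofReal]
        ring
      rw [expand, hugv i j, hvgu i j]
      rcases eq_or_ne i j with rfl | hij
      · rw [hga i, hgc i]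
        have h1 : al i * al i * a i + be i * be i * (-(c i)) = 0 := by
          have hne : a i + c i ≠ 0 := (hac i).ne'
          rw [hal2 i, hbe2 i]
          field_simp
          ring
        have h2 := congrArg (fun t : ℝ => (t : ℂ)) h1
        push_cast at h2 ⊢
        linear_combination h2
      · rw [hug i j hij, hvg i j hij]
        ring
    -- the w family from K
    have hwo : Orthonormal ℂ (fun i : Fin d => ((stdOrthonormalBasis ℂ ↥K i : ↥K) : H)) :=
      orthonormal_coe (stdOrthonormalBasis ℂ ↥K).orthonormal
    set w : Fin d → H := fun i => ((stdOrthonormalBasis ℂ ↥K i : ↥K) : H) with hwdef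
    have hwK : ∀ i, w i ∈ K := fun i => (stdOrthonormalBasis ℂ ↥K i).2
    have hgw : ∀ i, g (w i) = 0 := fun i => hgK _ (hwK i)
    have hzKperp : ∀ j, z j ∈ Kᗮ := by
      intro j
      rw [hzdef]
      exact Submodule.add_mem _ (Submodule.smul_mem _ _ (huP2 j))
        (Submodule.smul_mem _ _ (hvP2 j))
    have hwz : ∀ i j, ⟪w i, z j⟫_ℂ = 0 := fun i j =>
      (Submodule.mem_orthogonal _ _).mp (hzKperp j) _ (hwK i)
    have hgww : ∀ i j, ⟪w i, g (w j)⟫_ℂ = 0 := fun i j => by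
      rw [hgw j, inner_zero_right]
    have hgwz : ∀ i j, ⟪w i, g (z j)⟫_ℂ = 0 := fun i j =>
      (Submodule.mem_orthogonal _ _).mp (hKperp_g _ (hzKperp j)) _ (hwK i)
    have hgzw : ∀ i j, ⟪z i, g (w j)⟫_ℂ = 0 := fun i j => by
      rw [hgw j, inner_zero_right]
    obtain ⟨heo, heg⟩ := combine_families g w z hwo hzort hwz hgww hzgz hgwz hgzw
    have hcast_inj : Function.Injective (Fin.cast hdm.symm) := by
      intro x y hxy
      have := congrArg Fin.val hxy
      simpa [Fin.ext_iff] using this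
    refine finish (fun i => Fin.append w z (Fin.cast hdm.symm i)) (heo.comp _ hcast_inj)
      fun i j => heg _ _

/-- The generic spectral-type decomposition attached to `c` (one of the two parts). -/
private lemma decomp_generic (A g c c' s s' : H →L[ℂ] H) (lam : ℝ) (eps : ℝ)
    (hA : IsSelfAdjoint A) (hg : IsSelfAdjoint g) (hc : IsSelfAdjoint c)
    (hc' : IsSelfAdjoint c') (hssa : IsSelfAdjoint s) (hs'sa : IsSelfAdjoint s')
    (hA_eq : ∀ x : H, A x = g x + ((lam : ℂ)) • x)
    (hgeq : ∀ x : H, g x = ((eps : ℂ)) • (c' x - c x))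
    (hcc' : ∀ x, c (c' x) = 0)
    (hs2 : ∀ x, s (s x) = c x) (hs'2 : ∀ x, s' (s' x) = c' x)
    (hcomm : ∀ x, c (g x) = g (c x)) :
    IsClosed ((LinearMap.ker (c : H →ₗ[ℂ] H) : Submodule ℂ H) : Set H) ∧
    IsClosed (((LinearMap.ker (c : H →ₗ[ℂ] H) : Submodule ℂ H)ᗮ : Submodule ℂ H) : Set H) ∧
    (∀ x ∈ LinearMap.ker (c : H →ₗ[ℂ] H), ∀ y ∈ (LinearMap.ker (c : H →ₗ[ℂ] H) : Submodule ℂ H)ᗮ, ⟪x, y⟫_ℂ = 0) ∧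
    (LinearMap.ker (c : H →ₗ[ℂ] H) : Submodule ℂ H) ⊔ (LinearMap.ker (c : H →ₗ[ℂ] H) : Submodule ℂ H)ᗮ = ⊤ ∧
    (∀ x ∈ LinearMap.ker (c : H →ₗ[ℂ] H), A x ∈ LinearMap.ker (c : H →ₗ[ℂ] H)) ∧
    (∀ x ∈ (LinearMap.ker (c : H →ₗ[ℂ] H) : Submodule ℂ H)ᗮ, A x ∈ (LinearMap.ker (c : H →ₗ[ℂ] H) : Submodule ℂ H)ᗮ) ∧
    (∀ x ∈ LinearMap.ker (c : H →ₗ[ℂ] H), ‖x‖ = 1 →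
      ⟪x, A x⟫_ℂ = (((lam + eps * ‖s' x‖^2 : ℝ)) : ℂ)) ∧
    (∀ x ∈ (LinearMap.ker (c : H →ₗ[ℂ] H) : Submodule ℂ H)ᗮ, ‖x‖ = 1 →
      ⟪x, A x⟫_ℂ = (((lam - eps * ‖s x‖^2 : ℝ)) : ℂ) ∧ s x ≠ 0) := by
  have hclosed : IsClosed ((LinearMap.ker (c : H →ₗ[ℂ] H) : Submodule ℂ H) : Set H) :=
    ContinuousLinearMap.isClosed_ker c
  haveI : CompleteSpace (LinearMap.ker (c : H →ₗ[ℂ] H) : Submodule ℂ H) := hclosed.completeSpace_coe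
  have hinv1 : ∀ x ∈ LinearMap.ker (c : H →ₗ[ℂ] H), A x ∈ LinearMap.ker (c : H →ₗ[ℂ] H) := by
    intro x hx
    rw [LinearMap.mem_ker]
    rw [ContinuousLinearMap.coe_coe, hA_eq, map_add, map_smul, hcomm, show c x = 0 from hx, map_zero, smul_zero, add_zero]
  refine ⟨hclosed, Submodule.isClosed_orthogonal _, ?_, ?_, hinv1, ?_, ?_, ?_⟩
  · intro x hx y hy
    exact (Submodule.mem_orthogonal _ _).mp hy x hx
  · exact Submodule.sup_orthogonal_of_hasOrthogonalProjection
  · intro x hx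
    rw [Submodule.mem_orthogonal]
    intro w hw
    rw [← sa_symm hA, show ⟪A w, x⟫_ℂ = 0 from
      (Submodule.mem_orthogonal _ _).mp hx _ (hinv1 w hw)]
  · intro x hx hx1
    have hcx : c x = 0 := hx
    have h1 : ⟪x, g x⟫_ℂ = ((eps : ℂ)) * ⟪x, c' x⟫_ℂ := by
      rw [hgeq, inner_smul_right, inner_sub_right, hcx, inner_zero_right, sub_zero]
    have h2 : ⟪x, c' x⟫_ℂ = ((‖s' x‖^2 : ℝ) : ℂ) := by
      rw [← hs'2, ← sa_symm hs'sa, inner_self_eq_norm_sq_to_K]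
      norm_cast
    rw [hA_eq, inner_add_right, inner_smul_right, h1, h2,
      inner_self_eq_norm_sq_to_K, hx1]
    push_cast
    ring
  · intro x hx hx1
    have hc'x : c' x = 0 := by
      refine ext_inner_left ℂ fun v => ?_
      rw [inner_zero_right, ← sa_symm hc']
      exact (Submodule.mem_orthogonal _ _).mp hx _ (show c' v ∈ LinearMap.ker (c : H →ₗ[ℂ] H) from hcc' v)
    have hsx : s x ≠ 0 := by
      intro h0
      have : c x = 0 := by rw [← hs2, h0, map_zero]
      have hxK : x ∈ LinearMap.ker (c : H →ₗ[ℂ] H) := this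
      have := (Submodule.mem_orthogonal _ _).mp hx x hxK
      rw [inner_self_eq_zero] at this
      rw [this, norm_zero] at hx1
      norm_num at hx1
    have h1 : ⟪x, g x⟫_ℂ = -(((eps : ℂ)) * ⟪x, c x⟫_ℂ) := by
      rw [hgeq, inner_smul_right, inner_sub_right, hc'x, inner_zero_right, zero_sub,
        mul_neg]
    have h2 : ⟪x, c x⟫_ℂ = ((‖s x‖^2 : ℝ) : ℂ) := by
      rw [← hs2, ← sa_symm hssa, inner_self_eq_norm_sq_to_K]
      norm_cast
    refine ⟨?_, hsx⟩
    rw [hA_eq, inner_add_right, inner_smul_right, h1, h2,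
      inner_self_eq_norm_sq_to_K, hx1]
    push_cast
    ring

/-- the easy direction: a decomposition rules out membership of `lam`. -/
private lemma not_mem_of_decomp (A : H →L[ℂ] H) (k : ℕ) (lam : ℝ) (L : Set ℝ)
    (hlam : lam ∈ L) (V₁ V₂ : Submodule ℂ H)
    (horth : ∀ x ∈ V₁, ∀ y ∈ V₂, ⟪x, y⟫_ℂ = 0)
    (hsup : V₁ ⊔ V₂ = ⊤)
    (hrank : Module.rank ℂ V₁ < k)
    (hW2 : ∀ x ∈ V₂, ‖x‖ = 1 → ⟪x, A x⟫_ℂ ∈ Complex.ofReal '' Lᶜ) :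
    ((lam : ℂ)) ∉ rankKRange k A := by
  rintro ⟨P, ⟨hPsa, hPidem⟩, hPrank, hPAP⟩
  have hrfin : Module.rank ℂ V₁ < Cardinal.aleph0 :=
    lt_trans hrank (Cardinal.nat_lt_aleph0 _)
  haveI : FiniteDimensional ℂ V₁ := Module.rank_lt_aleph0_iff.mp hrfin
  haveI : CompleteSpace V₁ := FiniteDimensional.complete ℂ V₁
  set R : Submodule ℂ H := LinearMap.range (P : H →ₗ[ℂ] H) with hR
  set φ : ↥R →ₗ[ℂ] ↥V₁ := V₁.orthogonalProjectionOnto.toLinearMap ∘ₗ R.subtype with hφ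
  have hni : ¬ Function.Injective φ := by
    intro hinj
    have h1 : Module.rank ℂ R ≤ Module.rank ℂ V₁ := LinearMap.rank_le_of_injective φ hinj
    rw [show Module.rank ℂ R = opRank P from rfl, hPrank] at h1
    exact absurd (lt_of_le_of_lt h1 hrank) (by exact_mod_cast lt_irrefl k)
  rw [Function.not_injective_iff] at hni
  obtain ⟨p, q, hpq, hne⟩ := hni
  have hx0 : ((p - q : ↥R) : H) ≠ 0 := by
    intro hcon
    exact sub_ne_zero.mpr hne (by exact_mod_cast Subtype.coe_injective (hcon.trans rfl))
  have hxker : φ (p - q) = 0 := by rw [map_sub, hpq, sub_self]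
  have hxperp : ((p - q : ↥R) : H) ∈ V₁ᗮ := Submodule.orthogonalProjectionOnto_eq_zero_iff.mp hxker
  set x : H := ((p - q : ↥R) : H) with hx
  have hxR : x ∈ R := (p - q).2
  -- x belongs to V₂
  have hxV2 : x ∈ V₂ := by
    have hxtop : x ∈ V₁ ⊔ V₂ := by rw [hsup]; exact Submodule.mem_top
    obtain ⟨v₁, hv₁, v₂, hv₂, hsum⟩ := Submodule.mem_sup.mp hxtop
    have hv10 : v₁ = 0 := by
      have h1 : ⟪v₁, x⟫_ℂ = 0 := (Submodule.mem_orthogonal _ _).mp hxperp v₁ hv₁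
      have h2 : ⟪v₁, v₂⟫_ℂ = 0 := horth v₁ hv₁ v₂ hv₂
      rw [← hsum, inner_add_right, h2, add_zero, inner_self_eq_zero] at h1
      exact h1
    rw [← hsum, hv10, zero_add]
    exact hv₂
  -- normalize
  set ux : H := ((‖x‖⁻¹ : ℝ) : ℂ) • x with hux
  have hu1 : ‖ux‖ = 1 := unit_smul hx0
  have huxV2 : ux ∈ V₂ := V₂.smul_mem _ hxV2
  have huxR : ux ∈ R := R.smul_mem _ hxR
  have hP2 : ∀ t, P (P t) = P t := fun t => congrFun (congrArg (fun f => f.toFun) hPidem) t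
  have hPux : P ux = ux := by
    obtain ⟨y, hy⟩ := huxR
    have : P (P y) = P y := hP2 y
    rw [show (P : H →ₗ[ℂ] H) y = P y from rfl] at hy
    rw [← hy, this]
  have hPAPux : P (A (P ux)) = ((lam : ℂ)) • P ux := by
    have := congrFun (congrArg (fun f => f.toFun) hPAP) ux
    simpa using this
  have hval : ⟪ux, A ux⟫_ℂ = ((lam : ℂ)) := by
    conv_lhs => rw [← hPux]
    rw [sa_symm hPsa, hPAPux, hPux, inner_smul_right, inner_self_eq_norm_sq_to_K, hu1]
    norm_num
  obtain ⟨t, htL, htval⟩ := hW2 ux huxV2 hu1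
  rw [hval] at htval
  have : t = lam := by exact_mod_cast htval
  rw [this] at htL
  exact htL hlam

/-- For a self-adjoint operator `A`, `k ≤ dim ℋ`, and `λ ∈ ℝ`: `λ ∉ Λ_k(A)` iff `ℋ`
decomposes orthogonally as `V₁ ⊕ V₂` with both summands invariant under `A`,
`dim V₁ < k`, the numerical range of the restriction of `A` to `V₁` contained in `L`
and that of the restriction to `V₂` contained in `ℝ \ L`, where `L = [λ,∞)` or
`L = (-∞,λ]`. -/
theorem not_mem_rankKRange_iff_selfAdjoint
    (A : H →L[ℂ] H) (hA : IsSelfAdjoint A)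
    (k : ℕ) (hk : 1 ≤ k) (hkdim : (k : Cardinal) ≤ Module.rank ℂ H) (lam : ℝ) :
    (lam : ℂ) ∉ rankKRange k A ↔
      ∃ L : Set ℝ, (L = Set.Ici lam ∨ L = Set.Iic lam) ∧
        ∃ V₁ V₂ : Submodule ℂ H,
          IsClosed (V₁ : Set H) ∧ IsClosed (V₂ : Set H) ∧
          (∀ x ∈ V₁, ∀ y ∈ V₂, ⟪x, y⟫_ℂ = 0) ∧
          V₁ ⊔ V₂ = ⊤ ∧
          (∀ x ∈ V₁, A x ∈ V₁) ∧
          (∀ x ∈ V₂, A x ∈ V₂) ∧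
          Module.rank ℂ V₁ < k ∧
          (∀ x ∈ V₁, ‖x‖ = 1 → ⟪x, A x⟫_ℂ ∈ Complex.ofReal '' L) ∧
          (∀ x ∈ V₂, ‖x‖ = 1 → ⟪x, A x⟫_ℂ ∈ Complex.ofReal '' Lᶜ) := by
  classical
  set g : H →L[ℂ] H := A - (lam : ℂ) • 1 with hgdef
  have hsmul_sa : IsSelfAdjoint ((lam : ℂ) • (1 : H →L[ℂ] H)) := by
    rw [IsSelfAdjoint, star_smul, star_one, Complex.star_def, Complex.conj_ofReal]
  have hg : IsSelfAdjoint g := hA.sub hsmul_sa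
  have hA_eq : ∀ x : H, A x = g x + ((lam : ℂ)) • x := by
    intro x
    rw [hgdef]
    simp [ContinuousLinearMap.sub_apply]
  set gp := cfc (fun t : ℝ => max t 0) g with hgp_def
  set gn := cfc (fun t : ℝ => max (-t) 0) g with hgn_def
  set sp := cfc (fun t : ℝ => Real.sqrt (max t 0)) g with hsp_def
  set sn := cfc (fun t : ℝ => Real.sqrt (max (-t) 0)) g with hsn_def
  have hgp : IsSelfAdjoint gp := cfc_predicate _ g
  have hgn : IsSelfAdjoint gn := cfc_predicate _ g
  have hsp : IsSelfAdjoint sp := cfc_predicate _ g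
  have hsn : IsSelfAdjoint sn := cfc_predicate _ g
  have hdiff_op : gp - gn = g := by
    rw [hgp_def, hgn_def, ← cfc_sub ..]
    have heq : (fun t : ℝ => max t 0 - max (-t) 0) = fun t : ℝ => t := by
      funext t
      rcases le_total t 0 with h | h
      · rw [max_eq_right h, max_eq_left (by linarith), zero_sub, neg_neg]
      · rw [max_eq_left h, max_eq_right (by linarith), sub_zero]
    rw [heq]
    exact cfc_id' ℝ g
  have hdiff : ∀ x, g x = gp x - gn x := by
    intro x
    conv_lhs => rw [← hdiff_op]
    rfl
  have hmul_pn : gp * gn = 0 := by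
    rw [hgp_def, hgn_def, ← cfc_mul ..]
    have heq : (fun t : ℝ => max t 0 * max (-t) 0) = fun _ => (0 : ℝ) := by
      funext t
      rcases le_total t 0 with h | h
      · rw [max_eq_right h, zero_mul]
      · rw [max_eq_right (by linarith : -t ≤ 0), mul_zero]
    rw [heq, cfc_const_zero]
  have hmul_np : gn * gp = 0 := by
    rw [hgp_def, hgn_def, ← cfc_mul ..]
    have heq : (fun t : ℝ => max (-t) 0 * max t 0) = fun _ => (0 : ℝ) := by
      funext t
      rcases le_total t 0 with h | h
      · rw [max_eq_right h, mul_zero]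
      · rw [max_eq_right (by linarith : -t ≤ 0), zero_mul]
    rw [heq, cfc_const_zero]
  have hpn : ∀ x, gp (gn x) = 0 := by
    intro x
    have := congrArg (fun f : H →L[ℂ] H => f x) hmul_pn
    simpa [ContinuousLinearMap.mul_apply] using this
  have hnp : ∀ x, gn (gp x) = 0 := by
    intro x
    have := congrArg (fun f : H →L[ℂ] H => f x) hmul_np
    simpa [ContinuousLinearMap.mul_apply] using this
  have hsp2_op : sp * sp = gp := by
    rw [hsp_def, hgp_def, ← cfc_mul ..]
    congr 1
    funext t
    exact Real.mul_self_sqrt (le_max_right t 0)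
  have hsn2_op : sn * sn = gn := by
    rw [hsn_def, hgn_def, ← cfc_mul ..]
    congr 1
    funext t
    exact Real.mul_self_sqrt (le_max_right (-t) 0)
  have hsp2 : ∀ x, sp (sp x) = gp x := by
    intro x
    have := congrArg (fun f : H →L[ℂ] H => f x) hsp2_op
    simpa [ContinuousLinearMap.mul_apply] using this
  have hsn2 : ∀ x, sn (sn x) = gn x := by
    intro x
    have := congrArg (fun f : H →L[ℂ] H => f x) hsn2_op
    simpa [ContinuousLinearMap.mul_apply] using this
  have hcp_op : Commute gp g := by
    have := cfc_commute_cfc (fun t : ℝ => max t 0) (fun t : ℝ => t) g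
    rwa [cfc_id' ℝ g] at this
  have hcn_op : Commute gn g := by
    have := cfc_commute_cfc (fun t : ℝ => max (-t) 0) (fun t : ℝ => t) g
    rwa [cfc_id' ℝ g] at this
  have hcp : ∀ x, gp (g x) = g (gp x) := by
    intro x
    have := congrArg (fun f : H →L[ℂ] H => f x) hcp_op.eq
    simpa [ContinuousLinearMap.mul_apply] using this
  have hcn : ∀ x, gn (g x) = g (gn x) := by
    intro x
    have := congrArg (fun f : H →L[ℂ] H => f x) hcn_op.eq
    simpa [ContinuousLinearMap.mul_apply] using this
  have hgeq1 : ∀ x : H, g x = (((1:ℝ) : ℂ)) • (gp x - gn x) := by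
    intro x; rw [hdiff x]; norm_num
  have hgeqm1 : ∀ x : H, g x = (((-1:ℝ) : ℂ)) • (gn x - gp x) := by
    intro x; rw [hdiff x]; push_cast; rw [neg_one_smul, neg_sub]
  constructor
  · -- forward direction
    intro hnotmem
    by_cases hcase : (k : Cardinal) ≤ Module.rank ℂ (LinearMap.ker (gn : H →ₗ[ℂ] H))
    · -- then ker gp must be small; use L = Iic lam, V₁ = ker gp
      have hsmall : Module.rank ℂ (LinearMap.ker (gp : H →ₗ[ℂ] H)) < k := by
        by_contra hcon
        rw [not_lt] at hcon
        exact hnotmem (key_construction A g gp gn sp sn lam hA_eq hg hgp hgn hsp hsn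
          hdiff hpn hnp hsp2 hsn2 hcp hcn k hcon hcase)
      obtain ⟨hd1, hd2, hd3, hd4, hd5, hd6, hd7, hd8⟩ :=
        decomp_generic A g gp gn sp sn lam (-1) hA hg hgp hgn hsp hsn hA_eq hgeqm1
          hpn hsp2 hsn2 hcp
      refine ⟨Set.Iic lam, Or.inr rfl, LinearMap.ker (gp : H →ₗ[ℂ] H), (LinearMap.ker (gp : H →ₗ[ℂ] H) : Submodule ℂ H)ᗮ,
        hd1, hd2, hd3, hd4, hd5, hd6, hsmall, ?_, ?_⟩
      · intro x hx hx1
        refine ⟨lam + (-1) * ‖sn x‖^2, ?_, (hd7 x hx hx1).symm⟩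
        simp only [Set.mem_Iic]
        nlinarith [sq_nonneg ‖sn x‖]
      · intro x hx hx1
        obtain ⟨hval, hne⟩ := hd8 x hx hx1
        refine ⟨lam - (-1) * ‖sp x‖^2, ?_, hval.symm⟩
        simp only [Set.mem_compl_iff, Set.mem_Iic, not_le]
        have h0 : 0 < ‖sp x‖ := norm_pos_iff.mpr hne
        nlinarith
    · -- ker gn is small; use L = Ici lam, V₁ = ker gn
      have hsmall : Module.rank ℂ (LinearMap.ker (gn : H →ₗ[ℂ] H)) < k := not_le.mp hcase
      obtain ⟨hd1, hd2, hd3, hd4, hd5, hd6, hd7, hd8⟩ :=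
        decomp_generic A g gn gp sn sp lam 1 hA hg hgn hgp hsn hsp hA_eq hgeq1
          hnp hsn2 hsp2 hcn
      refine ⟨Set.Ici lam, Or.inl rfl, LinearMap.ker (gn : H →ₗ[ℂ] H), (LinearMap.ker (gn : H →ₗ[ℂ] H) : Submodule ℂ H)ᗮ,
        hd1, hd2, hd3, hd4, hd5, hd6, hsmall, ?_, ?_⟩
      · intro x hx hx1
        refine ⟨lam + 1 * ‖sp x‖^2, ?_, (hd7 x hx hx1).symm⟩
        simp only [Set.mem_Ici]
        nlinarith [sq_nonneg ‖sp x‖]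
      · intro x hx hx1
        obtain ⟨hval, hne⟩ := hd8 x hx hx1
        refine ⟨lam - 1 * ‖sn x‖^2, ?_, hval.symm⟩
        simp only [Set.mem_compl_iff, Set.mem_Ici, not_le]
        have h0 : 0 < ‖sn x‖ := norm_pos_iff.mpr hne
        nlinarith
  · rintro ⟨L, hL, V₁, V₂, _, _, horth, hsup, _, _, hrank, _, hW2⟩
    have hlam : lam ∈ L := by
      rcases hL with rfl | rfl
      · exact Set.self_mem_Ici
      · exact Set.self_mem_Iic
    exact not_mem_of_decomp A k lam L hlam V₁ V₂ horth hsup hrank hW2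
end
end

section
/- Let ℋ be a complex Hilbert space, A ∈ B(ℋ), and 1 ≤ r < k < ∞ with k ≤ dim ℋ. Then Λ_k(A) ⊆ ⋂{Λ_{k−r}(X*AX) : X ∈ V_r}, i.e., for every linear isometry X whose range is a closed subspace of ℋ of codimension at most r, every λ ∈ Λ_k(A) lies in Λ_{k−r}(X*AX). -/
noncomputable section

open scoped InnerProductSpace
open Complex

variable {H : Type*} [NormedAddCommGroup H] [InnerProductSpace ℂ H] [CompleteSpace H]

variable {K : Type*} [NormedAddCommGroup K] [InnerProductSpace ℂ K] [CompleteSpace K]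

/-- The compression `X*AX` of `A` by a linear isometry `X : 𝒦 → ℋ`. -/
def compress (X : K →ₗᵢ[ℂ] H) (A : H →L[ℂ] H) : K →L[ℂ] K :=
  ContinuousLinearMap.adjoint X.toContinuousLinearMap ∘L
    (A ∘L X.toContinuousLinearMap)

/-- `X ∈ V_r`: the range of the isometry `X` is the orthogonal complement of a
subspace of dimension at most `r`. -/
def MemVr (r : ℕ) (X : K →ₗᵢ[ℂ] H) : Prop :=
  ∃ H₁ : Submodule ℂ H, Module.rank ℂ H₁ ≤ r ∧ LinearMap.range X.toLinearMap = H₁ᗮ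

/-- For `1 ≤ r < k ≤ dim ℋ`: every `λ ∈ Λ_k(A)` lies in `Λ_{k-r}(X*AX)` for every
isometry `X ∈ V_r` (from any complex Hilbert space into `ℋ`). -/
theorem rankKRange_subset_compress
    (r k : ℕ) (hr : 1 ≤ r) (hrk : r < k) (hk : (k : Cardinal) ≤ Module.rank ℂ H)
    (A : H →L[ℂ] H) (X : K →ₗᵢ[ℂ] H) (hX : MemVr r X) :
    rankKRange k A ⊆ rankKRange (k - r) (compress X A) := by
  obtain ⟨H₁, hH₁r, hXr⟩ := hX
  intro lam hlam
  obtain ⟨P, ⟨hPsa, hPP⟩, hPrank, hPAP⟩ := hlam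
  set M : Submodule ℂ H := LinearMap.range (P : H →ₗ[ℂ] H) with hM
  have hMrank : Module.rank ℂ M = (k : Cardinal) := hPrank
  have hMfd : FiniteDimensional ℂ M :=
    Module.rank_lt_aleph0_iff.mp (by rw [hMrank]; exact Cardinal.nat_lt_aleph0 k)
  have hMfin : Module.finrank ℂ M = k := Module.finrank_eq_of_rank_eq hMrank
  have hH₁fd : FiniteDimensional ℂ H₁ :=
    Module.rank_lt_aleph0_iff.mp (lt_of_le_of_lt hH₁r (Cardinal.nat_lt_aleph0 r))
  have hH₁fin : Module.finrank ℂ H₁ ≤ r := by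
    have h := hH₁r
    rw [← Module.finrank_eq_rank ℂ H₁] at h
    exact_mod_cast h
  haveI : CompleteSpace H₁ := FiniteDimensional.complete ℂ H₁
  let g : M →ₗ[ℂ] H₁ := (H₁.orthogonalProjectionOnto).toLinearMap.comp M.subtype
  have hrn := LinearMap.finrank_range_add_finrank_ker g
  have hrange_le : Module.finrank ℂ (LinearMap.range g) ≤ r :=
    le_trans (Submodule.finrank_le _) hH₁fin
  have hker_ge : k - r ≤ Module.finrank ℂ (LinearMap.ker g) := by omega
  let N : Submodule ℂ H := (LinearMap.ker g).map M.subtype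
  have hNfin : Module.finrank ℂ N = Module.finrank ℂ (LinearMap.ker g) :=
    Submodule.finrank_map_subtype_eq M (LinearMap.ker g)
  have hNge : k - r ≤ Module.finrank ℂ N := by rw [hNfin]; exact hker_ge
  have hNM : N ≤ M := Submodule.map_subtype_le M _
  have hNorth : N ≤ H₁ᗮ := by
    rintro x ⟨y, hy, rfl⟩
    exact Submodule.orthogonalProjectionOnto_eq_zero_iff.mp hy
  obtain ⟨f, hf⟩ := exists_linearIndependent_of_le_finrank (R := ℂ) (M := N) hNge
  let L0 : Submodule ℂ N := Submodule.span ℂ (Set.range f)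
  have hL0 : Module.finrank ℂ L0 = k - r := by
    rw [finrank_span_eq_card hf, Fintype.card_fin]
  let L : Submodule ℂ H := L0.map N.subtype
  have hLfin : Module.finrank ℂ L = k - r := by
    rw [Submodule.finrank_map_subtype_eq]; exact hL0
  have hLN : L ≤ N := Submodule.map_subtype_le N L0
  have hLM : L ≤ M := le_trans hLN hNM
  have hLX : L ≤ LinearMap.range X.toLinearMap := by
    rw [hXr]; exact le_trans hLN hNorth
  let L' : Submodule ℂ K := L.comap X.toLinearMap
  have hmapL' : L'.map X.toLinearMap = L := by
    rw [Submodule.map_comap_eq, inf_eq_right.mpr hLX]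
  let e : L' ≃ₗ[ℂ] L :=
    (Submodule.equivMapOfInjective X.toLinearMap X.injective L').trans
      (LinearEquiv.ofEq _ _ hmapL')
  haveI : FiniteDimensional ℂ L := Submodule.finiteDimensional_of_le hLM
  haveI : FiniteDimensional ℂ L' := Module.Finite.equiv e.symm
  have hL'fin : Module.finrank ℂ L' = k - r := by
    rw [e.finrank_eq]; exact hLfin
  let Q : K →L[ℂ] K := L'.subtypeL ∘L L'.orthogonalProjectionOnto
  have hQmem : ∀ x : K, Q x ∈ L' := fun x => (L'.orthogonalProjectionOnto x).2
  have hQid : ∀ x ∈ L', Q x = x := by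
    intro x hx
    have : L'.orthogonalProjectionOnto x = ⟨x, hx⟩ :=
      Submodule.orthogonalProjectionOnto_mem_subspace_eq_self (⟨x, hx⟩ : L')
    simp only [Q, ContinuousLinearMap.comp_apply, this, Submodule.subtypeL_apply]
  have hQsa : IsSelfAdjoint Q := isSelfAdjoint_starProjection L'
  have hQQ : Q ∘L Q = Q := by
    ext x
    exact hQid _ (hQmem x)
  refine ⟨Q, ⟨hQsa, hQQ⟩, ?_, ?_⟩
  · have hrange : LinearMap.range (Q : K →ₗ[ℂ] K) = L' := by
      apply le_antisymm
      · rintro _ ⟨x, rfl⟩; exact hQmem x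
      · intro x hx; exact ⟨x, hQid x hx⟩
    rw [opRank, hrange, ← Module.finrank_eq_rank ℂ L', hL'fin]
  · have hMfix : ∀ x ∈ M, P x = x := by
      rintro _ ⟨y, rfl⟩
      exact ContinuousLinearMap.ext_iff.mp hPP y
    have hPinner : ∀ x y : H, x ∈ M → y ∈ M → ⟪x, A y⟫_ℂ = lam * ⟪x, y⟫_ℂ := by
      intro x y hx hy
      have h1 : ⟪x, A y⟫_ℂ = ⟪P x, A (P y)⟫_ℂ := by rw [hMfix x hx, hMfix y hy]
      have h2 : ⟪P x, A (P y)⟫_ℂ = ⟪x, P (A (P y))⟫_ℂ := by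
        nth_rewrite 1 [← hPsa.adjoint_eq]
        exact ContinuousLinearMap.adjoint_inner_left P (A (P y)) x
      have h3 : P (A (P y)) = lam • P y := ContinuousLinearMap.ext_iff.mp hPAP y
      rw [h1, h2, h3, hMfix y hy, inner_smul_right]
    have hL'inner : ∀ u v : K, u ∈ L' → v ∈ L' →
        ⟪u, compress X A v⟫_ℂ = lam * ⟪u, v⟫_ℂ := by
      intro u v hu hv
      have h1 : ⟪u, compress X A v⟫_ℂ
          = ⟪X.toContinuousLinearMap u, A (X.toContinuousLinearMap v)⟫_ℂ := by
        rw [compress, ContinuousLinearMap.comp_apply, ContinuousLinearMap.comp_apply,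
          ContinuousLinearMap.adjoint_inner_right]
      have hXu : X.toContinuousLinearMap u ∈ M := hLM hu
      have hXv : X.toContinuousLinearMap v ∈ M := hLM hv
      rw [h1, hPinner _ _ hXu hXv]
      congr 1
      exact X.inner_map_map u v
    have hQadj : ∀ (x w : K), ⟪Q x, w⟫_ℂ = ⟪x, Q w⟫_ℂ := by
      intro x w
      nth_rewrite 1 [← hQsa.adjoint_eq]
      exact ContinuousLinearMap.adjoint_inner_left Q w x
    ext y
    apply ext_inner_left ℂ
    intro x
    calc ⟪x, (Q ∘L compress X A ∘L Q) y⟫_ℂ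
        = ⟪Q x, compress X A (Q y)⟫_ℂ := (hQadj x _).symm
      _ = lam * ⟪Q x, Q y⟫_ℂ := hL'inner _ _ (hQmem x) (hQmem y)
      _ = lam * ⟪x, Q (Q y)⟫_ℂ := by rw [hQadj]
      _ = ⟪x, (lam • Q) y⟫_ℂ := by
          rw [hQid _ (hQmem y), ← inner_smul_right]
          rfl
end
end

section
/- Let ℋ be an infinite-dimensional complex Hilbert space, A ∈ B(ℋ), and μ ∈ ℂ such that A − μI is a compact operator. Then the following are equivalent: (a) Λ_∞(A) is nonempty; (b) Λ_∞(A) = {μ}; (c) μ ∈ Λ_k(A) for every positive integer k. -/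
noncomputable section

open scoped InnerProductSpace
open Complex

variable {H : Type*} [NormedAddCommGroup H] [InnerProductSpace ℂ H] [CompleteSpace H]

/-- The rank-`∞` numerical range `Λ_∞(A)`. -/
def rankInfRange (A : H →L[ℂ] H) : Set ℂ :=
  { lam | ∃ P : H →L[ℂ] H, IsOrthProj P ∧ Cardinal.aleph0 ≤ opRank P ∧
      P ∘L A ∘L P = lam • P }

-- orth projection onto a submodule, as an endomorphism
def projOf (V : Submodule ℂ H) [CompleteSpace V] : H →L[ℂ] H :=
  V.subtypeL ∘L V.orthogonalProjectionOnto

lemma projOf_mem (V : Submodule ℂ H) [CompleteSpace V] (x : H) : projOf V x ∈ V := by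
  simp [projOf]

lemma projOf_eq_self (V : Submodule ℂ H) [CompleteSpace V] {x : H} (hx : x ∈ V) :
    projOf V x = x := by
  exact (Submodule.starProjection_eq_self_iff (K := V)).2 hx

lemma isOrthProj_projOf (V : Submodule ℂ H) [CompleteSpace V] :
    IsOrthProj (projOf V) := by
  refine ⟨isSelfAdjoint_starProjection V, ?_⟩
  ext x
  exact projOf_eq_self V (projOf_mem V x)

lemma range_projOf (V : Submodule ℂ H) [CompleteSpace V] :
    LinearMap.range ((projOf V : H →L[ℂ] H) : H →ₗ[ℂ] H) = V := by
  apply le_antisymm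
  · rintro x ⟨y, rfl⟩; exact projOf_mem V y
  · intro x hx; exact ⟨x, projOf_eq_self V hx⟩

-- idempotent facts
lemma IsOrthProj.apply_mem_range {P : H →L[ℂ] H} (hP : IsOrthProj P) (x : H) :
    P x ∈ LinearMap.range ((P : H →L[ℂ] H) : H →ₗ[ℂ] H) := ⟨x, rfl⟩

lemma IsOrthProj.eq_self_of_mem {P : H →L[ℂ] H} (hP : IsOrthProj P) {x : H}
    (hx : x ∈ LinearMap.range ((P : H →L[ℂ] H) : H →ₗ[ℂ] H)) : P x = x := by
  obtain ⟨y, rfl⟩ := hx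
  have := congrArg (fun T : H →L[ℂ] H => T y) hP.2
  simpa using this

-- Lemma A groundwork: a compact orthogonal projection has finite rank
lemma IsOrthProj.finiteRank_of_compact {P : H →L[ℂ] H} (hP : IsOrthProj P)
    (hc : IsCompactOperator (⇑P)) : opRank P < Cardinal.aleph0 := by
  set V : Submodule ℂ H := LinearMap.range ((P : H →L[ℂ] H) : H →ₗ[ℂ] H) with hV
  have hc' : IsCompactOperator (⇑((P : H →L[ℂ] H) : H →ₗ[ℂ] H)) := by simpa using hc
  obtain ⟨K, hK, hKsub⟩ := hc'.image_closedBall_subset_compact 1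
  have h1 : IsCompact (Subtype.val '' Metric.closedBall (0 : V) 1) := by
    refine hK.of_isClosed_subset ?_ ?_
    · have : Subtype.val '' Metric.closedBall (0 : V) 1
          = (V : Set H) ∩ Metric.closedBall (0 : H) 1 := by
        ext x
        constructor
        · rintro ⟨y, hy, rfl⟩
          refine ⟨y.2, ?_⟩
          simpa [Metric.mem_closedBall, dist_eq_norm] using
            (by simpa [Metric.mem_closedBall, dist_eq_norm] using hy : ‖y‖ ≤ 1)
        · rintro ⟨hxV, hx⟩
          exact ⟨⟨x, hxV⟩, by simpa [Metric.mem_closedBall, dist_eq_norm] using hx, rfl⟩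
      rw [this]
      refine IsClosed.inter ?_ Metric.isClosed_closedBall
      have : (V : Set H) = {x | P x = x} := by
        ext x
        exact ⟨fun hx => hP.eq_self_of_mem hx, fun hx => ⟨x, hx⟩⟩
      rw [this]
      exact isClosed_eq P.continuous continuous_id
    · rintro _ ⟨y, hy, rfl⟩
      have hyb : (y : H) ∈ Metric.closedBall (0 : H) 1 := by
        simpa [Metric.mem_closedBall, dist_eq_norm] using hy
      have : P (y : H) = (y : H) := hP.eq_self_of_mem y.2
      have : (y : H) ∈ (P : H →ₗ[ℂ] H) '' Metric.closedBall (0 : H) 1 :=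
        ⟨(y : H), hyb, this⟩
      exact hKsub this
  have h2 : IsCompact (Metric.closedBall (0 : V) 1) := by
    rw [Topology.IsEmbedding.subtypeVal.isCompact_iff]
    exact h1
  haveI : FiniteDimensional ℂ V := .of_isCompact_closedBall₀ ℂ one_pos h2
  exact Module.rank_lt_aleph0 ℂ V

-- Lemma A: scalar on infinite-rank projection compact implies scalar zero
lemma smul_proj_compact_eq_zero {P : H →L[ℂ] H} (hP : IsOrthProj P)
    (hr : Cardinal.aleph0 ≤ opRank P) {c : ℂ} (hc : IsCompactOperator ⇑(c • P)) :
    c = 0 := by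
  by_contra h
  have h2 : (c⁻¹ • ⇑(c • P)) = ⇑P := by
    funext x; simp [smul_smul, inv_mul_cancel₀ h]
  have : IsCompactOperator (⇑P) := h2 ▸ hc.smul c⁻¹
  exact absurd hr (not_le.2 (hP.finiteRank_of_compact this))

-- Lemma B: compress an infinite-rank projection to rank k
lemma mem_rankK_of_infinite {A : H →L[ℂ] H} {μ : ℂ} {P : H →L[ℂ] H} (hP : IsOrthProj P)
    (hr : Cardinal.aleph0 ≤ opRank P) (hPA : P ∘L A ∘L P = μ • P) (k : ℕ) :
    μ ∈ rankKRange k A := by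
  set R : Submodule ℂ H := LinearMap.range ((P : H →L[ℂ] H) : H →ₗ[ℂ] H) with hR
  have hk : (k : Cardinal) ≤ Module.rank ℂ R := le_trans (Cardinal.nat_lt_aleph0 k).le hr
  obtain ⟨s, hcard, hsli⟩ := le_rank_iff_exists_linearIndependent_finset.mp hk
  set v : ↥(s : Set ↥R) → H := fun x => ((x : ↥R) : H) with hv
  have hvli : LinearIndependent ℂ v := by
    have := hsli.map' R.subtype (Submodule.ker_subtype R)
    exact this
  set V : Submodule ℂ H := Submodule.span ℂ (Set.range v) with hVdef
  have hfin : Module.finrank ℂ V = k := by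
    rw [finrank_span_eq_card hvli]
    simp [hcard]
  have hVR : V ≤ R := by
    rw [hVdef, Submodule.span_le]
    rintro _ ⟨x, rfl⟩
    exact (x : ↥R).2
  haveI : FiniteDimensional ℂ V := by
    apply FiniteDimensional.span_of_finite
    exact (Set.finite_range v)
  haveI : CompleteSpace V := FiniteDimensional.complete ℂ V
  refine ⟨projOf V, isOrthProj_projOf V, ?_, ?_⟩
  · rw [opRank, range_projOf]
    rw [← hfin]
    exact (Module.finrank_eq_rank ℂ V).symm
  · ext x
    have hPQ : ∀ y : H, P (projOf V y) = projOf V y := fun y =>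
      hP.eq_self_of_mem (hVR (projOf_mem V y))
    have hQP : projOf V ∘L P = projOf V := by
      have h1 : P ∘L projOf V = projOf V := by
        ext y; exact hPQ y
      have h2 := congrArg ContinuousLinearMap.adjoint h1
      rwa [ContinuousLinearMap.adjoint_comp, hP.1.adjoint_eq,
        (isOrthProj_projOf V).1.adjoint_eq] at h2
    have hQPpt : ∀ y : H, projOf V (P y) = projOf V y := fun y =>
      congrArg (fun T : H →L[ℂ] H => T y) hQP
    have key : projOf V (A (projOf V x)) = μ • projOf V x := by
      have h3 : P (A (P (projOf V x))) = μ • P (projOf V x) :=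
        congrArg (fun T : H →L[ℂ] H => T (projOf V x)) hPA
      calc projOf V (A (projOf V x))
          = projOf V (A (P (projOf V x))) := by rw [hPQ x]
        _ = projOf V (P (A (P (projOf V x)))) := (hQPpt _).symm
        _ = projOf V (μ • P (projOf V x)) := by rw [h3]
        _ = μ • projOf V (P (projOf V x)) := by rw [map_smul]
        _ = μ • projOf V (projOf V x) := by rw [hQPpt]
        _ = μ • projOf V x := by
            rw [projOf_eq_self V (projOf_mem V x)]
    simpa using key

section Construction

variable {B : H →L[ℂ] H}

def GoodFam (B : H →L[ℂ] H) {n : ℕ} (v : Fin n → H) : Prop :=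
  (∀ i, ‖v i‖ = 1) ∧ (∀ i j, i ≠ j → ⟪v i, v j⟫_ℂ = 0) ∧ (∀ i j, ⟪v i, B (v j)⟫_ℂ = 0)

lemma step_exists (hyp : ∀ k : ℕ, 1 ≤ k → ∃ P : H →L[ℂ] H,
      IsOrthProj P ∧ opRank P = k ∧ P ∘L B ∘L P = 0)
    (n : ℕ) (v : Fin n → H) (hv : GoodFam B v) :
    ∃ x : H, GoodFam B (Fin.snoc v x) := by
  obtain ⟨P, hP, hrank, hPBP⟩ := hyp (3 * n + 1) (by omega)
  set W : Submodule ℂ H := LinearMap.range ((P : H →L[ℂ] H) : H →ₗ[ℂ] H) with hW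
  haveI : Module.Finite ℂ W := Module.finite_of_rank_eq_nat (by exact_mod_cast hrank)
  have hfinW : Module.finrank ℂ W = 3 * n + 1 := Module.finrank_eq_of_rank_eq (by exact_mod_cast hrank)
  set Φ : W →ₗ[ℂ] ((Fin n → ℂ) × (Fin n → ℂ) × (Fin n → ℂ)) :=
    { toFun := fun x => (fun i => ⟪v i, (x : H)⟫_ℂ, fun i => ⟪v i, B (x : H)⟫_ℂ,
        fun i => ⟪B (v i), (x : H)⟫_ℂ)
      map_add' := by
        intro x y
        refine Prod.ext ?_ (Prod.ext ?_ ?_) <;> funext i <;>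
          simp [inner_add_right]
      map_smul' := by
        intro c x
        refine Prod.ext ?_ (Prod.ext ?_ ?_) <;> funext i <;>
          simp [inner_smul_right] } with hΦ
  have hnotinj : ¬ Function.Injective Φ := by
    intro hinj
    have hle := LinearMap.finrank_le_finrank_of_injective hinj
    rw [hfinW] at hle
    have h1 : Module.finrank ℂ ((Fin n → ℂ) × (Fin n → ℂ) × (Fin n → ℂ)) = n + (n + n) := by
      simp [Module.finrank_prod]
    omega
  rw [← LinearMap.ker_eq_bot] at hnotinj
  obtain ⟨x, hxker, hxne⟩ := (Submodule.ne_bot_iff _).1 hnotinj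
  have hΦx : Φ x = 0 := LinearMap.mem_ker.1 hxker
  have hA1 : ∀ i, ⟪v i, (x : H)⟫_ℂ = 0 := fun i => by
    have := congrFun (congrArg Prod.fst hΦx) i
    simpa [hΦ] using this
  have hA2 : ∀ i, ⟪v i, B (x : H)⟫_ℂ = 0 := fun i => by
    have := congrFun (congrArg (fun p => p.2.1) hΦx) i
    simpa [hΦ] using this
  have hA3 : ∀ i, ⟪B (v i), (x : H)⟫_ℂ = 0 := fun i => by
    have := congrFun (congrArg (fun p => p.2.2) hΦx) i
    simpa [hΦ] using this
  have hadj : ∀ a b : H, ⟪P a, b⟫_ℂ = ⟪a, P b⟫_ℂ := fun a b => by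
    conv_lhs => rw [← hP.1.adjoint_eq]
    exact ContinuousLinearMap.adjoint_inner_left _ _ _
  have hPx : P (x : H) = (x : H) := hP.eq_self_of_mem x.2
  have hxBx : ⟪(x : H), B (x : H)⟫_ℂ = 0 := by
    calc ⟪(x : H), B (x : H)⟫_ℂ = ⟪P (x : H), B (P (x : H))⟫_ℂ := by rw [hPx]
      _ = ⟪(x : H), P (B (P (x : H)))⟫_ℂ := hadj _ _
      _ = ⟪(x : H), (P ∘L B ∘L P) (x : H)⟫_ℂ := rfl
      _ = 0 := by rw [hPBP]; simp
  have hy0' : (x : H) ≠ 0 := fun h => hxne (ZeroMemClass.coe_eq_zero.1 h)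
  set y0 : H := (x : H) with hy0def
  have hy0 : y0 ≠ 0 := hy0'
  have hn : ‖y0‖ ≠ 0 := norm_ne_zero_iff.2 hy0
  set c : ℂ := ((‖y0‖ : ℂ))⁻¹ with hcdef
  have hxn : ‖c • y0‖ = 1 := by
    simp [hcdef, norm_smul, inv_mul_cancel₀ hn]
  refine ⟨c • y0, ?_, ?_, ?_⟩
  · intro i
    refine Fin.lastCases ?_ ?_ i
    · rw [Fin.snoc_last]; exact hxn
    · intro i'; rw [Fin.snoc_castSucc]; exact hv.1 i'
  · intro i j
    refine Fin.lastCases ?_ ?_ i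
    · refine Fin.lastCases ?_ ?_ j
      · intro hij; exact absurd rfl hij
      · intro j' _
        rw [Fin.snoc_last, Fin.snoc_castSucc, inner_smul_left,
          inner_eq_zero_symm.1 (hA1 j'), mul_zero]
    · intro i'
      refine Fin.lastCases ?_ ?_ j
      · intro _
        rw [Fin.snoc_castSucc, Fin.snoc_last, inner_smul_right, hA1 i', mul_zero]
      · intro j' hij
        rw [Fin.snoc_castSucc, Fin.snoc_castSucc]
        exact hv.2.1 i' j' (fun h => hij (by rw [h]))
  · intro i j
    refine Fin.lastCases ?_ ?_ i
    · refine Fin.lastCases ?_ ?_ j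
      · rw [Fin.snoc_last, map_smul, inner_smul_left, inner_smul_right, hxBx]
        ring
      · intro j'
        rw [Fin.snoc_last, Fin.snoc_castSucc, inner_smul_left,
          inner_eq_zero_symm.1 (hA3 j'), mul_zero]
    · intro i'
      refine Fin.lastCases ?_ ?_ j
      · rw [Fin.snoc_castSucc, Fin.snoc_last, map_smul, inner_smul_right, hA2 i', mul_zero]
      · intro j'
        rw [Fin.snoc_castSucc, Fin.snoc_castSucc]
        exact hv.2.2 i' j'

lemma exists_orthoseq (hyp : ∀ k : ℕ, 1 ≤ k → ∃ P : H →L[ℂ] H,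
      IsOrthProj P ∧ opRank P = k ∧ P ∘L B ∘L P = 0) :
    ∃ e : ℕ → H, (∀ i, ‖e i‖ = 1) ∧ (∀ i j : ℕ, i ≠ j → ⟪e i, e j⟫_ℂ = 0) ∧
      (∀ i j : ℕ, ⟪e i, B (e j)⟫_ℂ = 0) := by
  choose f hf using step_exists hyp
  let g : ∀ n : ℕ, {v : Fin n → H // GoodFam B v} := fun n =>
    Nat.rec ⟨fun i => i.elim0, fun i => i.elim0, fun i => i.elim0, fun i => i.elim0⟩
      (fun m p => ⟨Fin.snoc p.1 (f m p.1 p.2), hf m p.1 p.2⟩) n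
  let e : ℕ → H := fun n => (g (n + 1)).1 (Fin.last n)
  have hg : ∀ n (i : Fin n), (g n).1 i = e i.1 := by
    intro n
    induction n with
    | zero => intro i; exact i.elim0
    | succ m ih =>
      intro i
      refine Fin.lastCases ?_ ?_ i
      · simp only [Fin.val_last]; rfl
      · intro i'
        have h1 : (g (m + 1)).1 i'.castSucc = (g m).1 i' := by
          show (Fin.snoc (g m).1 (f m (g m).1 (g m).2) : Fin (m + 1) → H) i'.castSucc = _
          rw [Fin.snoc_castSucc]
        rw [h1, ih i']
        simp
  refine ⟨e, ?_, ?_, ?_⟩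
  · intro i
    exact ((g (i + 1)).2).1 (Fin.last i)
  · intro i j hij
    have hi : i < max i j + 1 := by omega
    have hj : j < max i j + 1 := by omega
    have := (g (max i j + 1)).2.2.1 ⟨i, hi⟩ ⟨j, hj⟩ (by simpa [Fin.ext_iff] using hij)
    rwa [hg (max i j + 1) ⟨i, hi⟩, hg (max i j + 1) ⟨j, hj⟩] at this
  · intro i j
    have hi : i < max i j + 1 := by omega
    have hj : j < max i j + 1 := by omega
    have := (g (max i j + 1)).2.2.2 ⟨i, hi⟩ ⟨j, hj⟩
    rwa [hg (max i j + 1) ⟨i, hi⟩, hg (max i j + 1) ⟨j, hj⟩] at this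

lemma exists_infRank_proj_zero (hyp : ∀ k : ℕ, 1 ≤ k → ∃ P : H →L[ℂ] H,
      IsOrthProj P ∧ opRank P = k ∧ P ∘L B ∘L P = 0) :
    ∃ P : H →L[ℂ] H, IsOrthProj P ∧ Cardinal.aleph0 ≤ opRank P ∧ P ∘L B ∘L P = 0 := by
  obtain ⟨e, he1, he2, he3⟩ := exists_orthoseq hyp
  have horth : Orthonormal ℂ e := by
    rw [orthonormal_iff_ite]
    intro i j
    by_cases h : i = j
    · subst h; simp [inner_self_eq_norm_sq_to_K, he1 i]
    · simp [h, he2 i j h]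
  set V : Submodule ℂ H := (Submodule.span ℂ (Set.range e)).topologicalClosure with hVdef
  haveI : CompleteSpace V := (Submodule.isClosed_topologicalClosure _).completeSpace_coe
  have heV : ∀ i, e i ∈ V := fun i =>
    (Submodule.le_topologicalClosure _) (Submodule.subset_span ⟨i, rfl⟩)
  refine ⟨projOf V, isOrthProj_projOf V, ?_, ?_⟩
  · rw [opRank, range_projOf]
    have hli : LinearIndependent ℂ (fun i : ℕ => (⟨e i, heV i⟩ : V)) := by
      apply LinearIndependent.of_comp V.subtype
      exact horth.linearIndependent
    exact hli.aleph0_le_rank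
  · have h1 : ∀ j, ∀ x ∈ V, ⟪x, B (e j)⟫_ℂ = 0 := by
      intro j
      have hVle : V ≤ LinearMap.ker (innerSL ℂ (B (e j)) : H →ₗ[ℂ] ℂ) := by
        apply Submodule.topologicalClosure_minimal
        · rw [Submodule.span_le]
          rintro _ ⟨i, rfl⟩
          simp only [SetLike.mem_coe, LinearMap.mem_ker, innerSL_apply_apply]
          exact inner_eq_zero_symm.1 (he3 i j)
        · exact ContinuousLinearMap.isClosed_ker _
      intro x hx
      have h := LinearMap.mem_ker.1 (hVle hx)
      exact inner_eq_zero_symm.1 (by simpa using h)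
    have h2 : ∀ x ∈ V, ∀ y ∈ V, ⟪x, B y⟫_ℂ = 0 := by
      intro x hx
      have hVle : V ≤ LinearMap.ker ((innerSL ℂ x).comp B : H →ₗ[ℂ] ℂ) := by
        apply Submodule.topologicalClosure_minimal
        · rw [Submodule.span_le]
          rintro _ ⟨j, rfl⟩
          simp only [SetLike.mem_coe, LinearMap.mem_ker, ContinuousLinearMap.coe_comp',
            Function.comp_apply, innerSL_apply_apply]
          exact h1 j x hx
        · exact ContinuousLinearMap.isClosed_ker _
      intro y hy
      have h := LinearMap.mem_ker.1 (hVle hy)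
      simpa using h
    ext z
    have hw : projOf V (B (projOf V z)) ∈ V := projOf_mem V _
    have hadj : ∀ a b : H, ⟪projOf V a, b⟫_ℂ = ⟪a, projOf V b⟫_ℂ := fun a b => by
      conv_lhs => rw [← (isOrthProj_projOf V).1.adjoint_eq]
      exact ContinuousLinearMap.adjoint_inner_left _ _ _
    have key : ⟪projOf V (B (projOf V z)), projOf V (B (projOf V z))⟫_ℂ = 0 := by
      calc ⟪projOf V (B (projOf V z)), projOf V (B (projOf V z))⟫_ℂ
          = ⟪B (projOf V z), projOf V (projOf V (B (projOf V z)))⟫_ℂ := hadj _ _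
        _ = ⟪B (projOf V z), projOf V (B (projOf V z))⟫_ℂ := by
            rw [projOf_eq_self V hw]
        _ = 0 := inner_eq_zero_symm.1
            (h2 _ hw _ (projOf_mem V z))
    have hz : projOf V (B (projOf V z)) = 0 := inner_self_eq_zero.1 key
    simpa using hz

end Construction

/-- Let `A` be an operator on an infinite-dimensional Hilbert space and `μ ∈ ℂ` with
`A - μI` compact.  Then the following are equivalent: (a) `Λ_∞(A)` is nonempty;
(b) `Λ_∞(A) = {μ}`; (c) `μ ∈ Λ_k(A)` for every `k ≥ 1`. -/
theorem rankInfRange_compact_tfae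
    (hH : ¬ FiniteDimensional ℂ H) (A : H →L[ℂ] H) (μ : ℂ)
    (hcompact : IsCompactOperator (A - μ • (1 : H →L[ℂ] H))) :
    ((rankInfRange A).Nonempty ↔ rankInfRange A = {μ}) ∧
    (rankInfRange A = {μ} ↔ ∀ k : ℕ, 1 ≤ k → μ ∈ rankKRange k A) := by
  set B : H →L[ℂ] H := A - μ • (1 : H →L[ℂ] H) with hB
  have key0 : ∀ P : H →L[ℂ] H, P ∘L P = P →
      P ∘L B ∘L P = (P ∘L A ∘L P) - μ • P := by
    intro P hPP
    have hpp : ∀ y, P (P y) = P y := fun y => congrArg (fun T : H →L[ℂ] H => T y) hPP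
    ext x
    simp [hB, ContinuousLinearMap.sub_apply, ContinuousLinearMap.smul_apply,
      ContinuousLinearMap.one_apply, map_sub, map_smul, hpp x]
  have hBA : ∀ (P : H →L[ℂ] H) (lam : ℂ), P ∘L P = P →
      (P ∘L A ∘L P = lam • P ↔ P ∘L B ∘L P = (lam - μ) • P) := by
    intro P lam hPP
    rw [key0 P hPP, sub_smul]
    constructor
    · intro h; rw [h]
    · intro h; exact sub_left_inj.1 h
  have lemA : ∀ lam ∈ rankInfRange A, lam = μ := by
    rintro lam ⟨P, hP, hr, hPA⟩
    have hPBP : P ∘L B ∘L P = (lam - μ) • P := (hBA P lam hP.2).1 hPA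
    have hcomp : IsCompactOperator ⇑(P ∘L B ∘L P) := by
      have h1 : IsCompactOperator (⇑B ∘ ⇑P) := hcompact.comp_clm P
      have h2 : IsCompactOperator (⇑P ∘ (⇑B ∘ ⇑P)) := h1.continuous_comp P.continuous
      have h3 : ⇑(P ∘L B ∘L P) = ⇑P ∘ (⇑B ∘ ⇑P) := rfl
      rw [h3]
      exact h2
    rw [hPBP] at hcomp
    have := smul_proj_compact_eq_zero hP hr hcomp
    exact sub_eq_zero.1 this
  refine ⟨⟨?_, ?_⟩, ?_, ?_⟩
  · rintro ⟨lam, hlam⟩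
    ext z
    simp only [Set.mem_singleton_iff]
    refine ⟨fun hz => lemA z hz, fun hz => ?_⟩
    rw [hz, ← lemA lam hlam]
    exact hlam
  · intro h; rw [h]; exact ⟨μ, rfl⟩
  · intro h k hk
    have hμ : μ ∈ rankInfRange A := by rw [h]; rfl
    obtain ⟨P, hP, hr, hPA⟩ := hμ
    exact mem_rankK_of_infinite hP hr hPA k
  · intro h
    have hyp : ∀ k : ℕ, 1 ≤ k → ∃ P : H →L[ℂ] H,
        IsOrthProj P ∧ opRank P = k ∧ P ∘L B ∘L P = 0 := by
      intro k hk
      obtain ⟨P, hP, hrk, hPA⟩ := h k hk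
      refine ⟨P, hP, hrk, ?_⟩
      have := (hBA P μ hP.2).1 hPA
      simpa using this
    obtain ⟨P, hP, hr, hPBP⟩ := exists_infRank_proj_zero hyp
    have hμmem : μ ∈ rankInfRange A :=
      ⟨P, hP, hr, (hBA P μ hP.2).2 (by simpa using hPBP)⟩
    ext z
    simp only [Set.mem_singleton_iff]
    exact ⟨fun hz => lemA z hz, fun hz => by rw [hz]; exact hμmem⟩
end
end
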